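/- arXiv:1903.05487 — 4 statements merged into one kernel-verified Lean document; each statement's English description precedes it below -/
import Mathlib

section
/- For an odd primitive Dirichlet character χ mod an odd prime q, L'/L(0,χ) = log(2π/q) + γ - L'/L(1, χ̄), where γ is the Euler–Mascheroni constant. -/
open Real

private lemma hasDerivAt_Gammaℝ_two :
    HasDerivAt Complex.Gammaℝ
      (-((Real.eulerMascheroniConstant : ℂ) + Complex.log (Real.pi)) / (2 * Real.pi)) 2 := by
  have hπ : (Real.pi : ℂ) ≠ 0 := Complex.ofReal_ne_zero.mpr Real.pi_ne_zero
  have hf : HasDerivAt (fun s : ℂ => (Real.pi : ℂ) ^ (-s / 2))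
      ((Real.pi : ℂ) ^ (-(2:ℂ) / 2) * Complex.log Real.pi * (-1 / 2)) 2 := by
    have h1 : HasDerivAt (fun s : ℂ => -s / 2) (-1 / 2) 2 := by
      simpa using ((hasDerivAt_id (2:ℂ)).neg).div_const 2
    exact h1.const_cpow (Or.inl hπ)
  have hg : HasDerivAt (fun s : ℂ => Complex.Gamma (s / 2))
      (-(Real.eulerMascheroniConstant : ℂ) * (1 / 2)) 2 := by
    have h2 : HasDerivAt (fun s : ℂ => s / 2) (1 / 2) 2 := (hasDerivAt_id (2:ℂ)).div_const 2
    have h3 : HasDerivAt Complex.Gamma (-(Real.eulerMascheroniConstant : ℂ))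
        ((fun s : ℂ => s / 2) 2) := by
      norm_num [Complex.hasDerivAt_Gamma_one]
    exact HasDerivAt.comp (h := fun s : ℂ => s / 2) (h₂ := Complex.Gamma) 2 h3 h2
  have h := hf.mul hg
  refine h.congr_deriv ?_
  have e1 : (-(2:ℂ) / 2) = -1 := by norm_num
  have e2 : ((2:ℂ) / 2) = 1 := by norm_num
  rw [e1, e2, Complex.cpow_neg_one, Complex.Gamma_one,
    ← Complex.ofReal_log Real.pi_pos.le]
  field_simp
  ring

theorem logDeriv_L_zero_one_relation (q : ℕ) [NeZero q] (hq : q.Prime) (hodd : Odd q)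
    (χ : DirichletCharacter ℂ q) (hχ : χ ≠ 1) (hχodd : χ.Odd) :
    deriv (DirichletCharacter.LFunction χ) 0 / DirichletCharacter.LFunction χ 0 =
      Complex.log (2 * Real.pi / q) + (Real.eulerMascheroniConstant : ℂ) -
        deriv (DirichletCharacter.LFunction (χ.ringHomComp (starRingEnd ℂ))) 1 /
          DirichletCharacter.LFunction (χ.ringHomComp (starRingEnd ℂ)) 1 := by
  haveI : Fact q.Prime := ⟨hq⟩
  have hq1 : q ≠ 1 := hq.one_lt.ne'
  have hq0 : (q : ℂ) ≠ 0 := Nat.cast_ne_zero.mpr (NeZero.ne q)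
  have hπ : (Real.pi : ℂ) ≠ 0 := Complex.ofReal_ne_zero.mpr Real.pi_ne_zero
  have hconj : χ.ringHomComp (starRingEnd ℂ) = χ⁻¹ := MulChar.star_eq_inv χ
  rw [hconj]
  have hχinv : χ⁻¹ ≠ 1 := fun h => hχ (inv_eq_one.mp h)
  have hχinvodd : (χ⁻¹).Odd := by
    show χ⁻¹ (-1) = -1
    rw [MulChar.inv_apply', inv_neg_one]
    exact hχodd
  have hprim : χ.IsPrimitive := by
    rcases hq.eq_one_or_self_of_dvd _ (DirichletCharacter.conductor_dvd_level χ) with h | h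
    · exact absurd ((DirichletCharacter.eq_one_iff_conductor_eq_one).mpr h) hχ
    · exact h
  set γ' : ℂ := (Real.eulerMascheroniConstant : ℂ) with hγ'
  set c1 : ℂ := -(γ' + Complex.log (4 * Real.pi)) / 2 with hc1
  set c2 : ℂ := -(γ' + Complex.log (Real.pi)) / (2 * Real.pi) with hc2
  set L := DirichletCharacter.LFunction χ with hL
  set L₁ := DirichletCharacter.LFunction χ⁻¹ with hL₁
  set Λ := DirichletCharacter.completedLFunction χ with hΛ
  set M := DirichletCharacter.completedLFunction χ⁻¹ with hM
  set W := DirichletCharacter.rootNumber χ with hW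
  -- nonvanishing
  have hv : L₁ 1 ≠ 0 :=
    DirichletCharacter.LFunction_ne_zero_of_one_le_re χ⁻¹ (Or.inl hχinv) (by norm_num)
  have hWne : W ≠ 0 := by
    have hcard : ((Fintype.card (ZMod q) : ℂ)) ≠ 0 := by
      simp [ZMod.card, NeZero.ne q]
    have hg : gaussSum χ ZMod.stdAddChar ≠ 0 :=
      gaussSum_ne_zero_of_nontrivial hcard hχ (ZMod.isPrimitive_stdAddChar q)
    rw [hW, DirichletCharacter.rootNumber]
    apply div_ne_zero (div_ne_zero hg (pow_ne_zero _ Complex.I_ne_zero))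
    simp [Complex.cpow_eq_zero_iff, hq0]
  have hPne : (q : ℂ) ^ ((1:ℂ) - 1/2) ≠ 0 := by
    simp [Complex.cpow_eq_zero_iff, hq0]
  -- Gammaℝ values
  have hG2 : Complex.Gammaℝ 2 = ((Real.pi : ℂ))⁻¹ := by
    rw [Complex.Gammaℝ_def, show (-(2:ℂ)/2) = -1 by norm_num, show ((2:ℂ)/2) = 1 by norm_num,
      Complex.cpow_neg_one, Complex.Gamma_one, mul_one]
  -- Gammaℝ derivative facts
  have hGd1 : HasDerivAt (fun s : ℂ => Complex.Gammaℝ (s + 1)) c1 0 := by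
    have h2 : HasDerivAt (fun s : ℂ => s + 1) 1 0 := (hasDerivAt_id (0:ℂ)).add_const 1
    have h3 : HasDerivAt Complex.Gammaℝ c1 ((fun s : ℂ => s + 1) 0) := by
      rw [show ((fun s : ℂ => s + 1) 0) = 1 by norm_num]
      exact Complex.hasDerivAt_Gammaℝ_one
    simpa [Function.comp_def] using HasDerivAt.comp (h := fun s : ℂ => s + 1) (h₂ := Complex.Gammaℝ) 0 h3 h2
  have hGd2 : HasDerivAt (fun s : ℂ => Complex.Gammaℝ (s + 1)) c2 1 := by
    have h2 : HasDerivAt (fun s : ℂ => s + 1) 1 1 := (hasDerivAt_id (1:ℂ)).add_const 1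
    have h3 : HasDerivAt Complex.Gammaℝ c2 ((fun s : ℂ => s + 1) 1) := by
      rw [show ((fun s : ℂ => s + 1) 1) = 2 by norm_num]
      exact hasDerivAt_Gammaℝ_two
    simpa [Function.comp_def] using HasDerivAt.comp (h := fun s : ℂ => s + 1) (h₂ := Complex.Gammaℝ) 1 h3 h2
  -- Λ vs L near 0
  have hEq0 : (fun s => L s * Complex.Gammaℝ (s + 1)) =ᶠ[nhds (0:ℂ)] Λ := by
    have hev : ∀ᶠ s in nhds (0:ℂ), Complex.Gammaℝ (s + 1) ≠ 0 := by
      refine hGd1.continuousAt.eventually_ne ?_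
      simp [Complex.Gammaℝ_one]
    filter_upwards [hev] with s hs
    rw [hΛ, hL, DirichletCharacter.LFunction_eq_completed_div_gammaFactor χ s (Or.inr hq1),
      hχodd.gammaFactor_def, div_mul_cancel₀ _ hs]
  have hEq1 : (fun s => L₁ s * Complex.Gammaℝ (s + 1)) =ᶠ[nhds (1:ℂ)] M := by
    have hev : ∀ᶠ s in nhds (1:ℂ), Complex.Gammaℝ (s + 1) ≠ 0 := by
      refine hGd2.continuousAt.eventually_ne ?_
      rw [one_add_one_eq_two, hG2]
      exact inv_ne_zero hπ
    filter_upwards [hev] with s hs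
    rw [hM, hL₁, DirichletCharacter.LFunction_eq_completed_div_gammaFactor χ⁻¹ s (Or.inr hq1),
      hχinvodd.gammaFactor_def, div_mul_cancel₀ _ hs]
  -- values
  have hΛ0 : Λ 0 = L 0 := by
    rw [hΛ, hL, DirichletCharacter.LFunction_eq_completed_div_gammaFactor χ 0 (Or.inr hq1),
      hχodd.gammaFactor_def]
    simp [Complex.Gammaℝ_one]
  have hM1 : M 1 = L₁ 1 * ((Real.pi : ℂ))⁻¹ := by
    rw [hM, hL₁, DirichletCharacter.LFunction_eq_completed_div_gammaFactor χ⁻¹ 1 (Or.inr hq1),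
      hχinvodd.gammaFactor_def, one_add_one_eq_two, hG2, div_mul_cancel₀ _ (inv_ne_zero hπ)]
  -- derivatives
  have hLd : DifferentiableAt ℂ L 0 := DirichletCharacter.differentiableAt_LFunction χ 0 (Or.inr hχ)
  have hL₁d : DifferentiableAt ℂ L₁ 1 :=
    DirichletCharacter.differentiableAt_LFunction χ⁻¹ 1 (Or.inr hχinv)
  have hderivΛ0 : deriv Λ 0 = deriv L 0 + L 0 * c1 := by
    rw [← hEq0.deriv_eq]
    have h := (hLd.hasDerivAt.mul hGd1).deriv
    rw [show (fun s => L s * Complex.Gammaℝ (s + 1)) = (L * fun s => Complex.Gammaℝ (s + 1)) from rfl, h]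
    simp [Complex.Gammaℝ_one]
  have hderivM1 : deriv M 1 = deriv L₁ 1 * ((Real.pi : ℂ))⁻¹ + L₁ 1 * c2 := by
    rw [← hEq1.deriv_eq]
    have h := (hL₁d.hasDerivAt.mul hGd2).deriv
    rw [show (fun s => L₁ s * Complex.Gammaℝ (s + 1)) = (L₁ * fun s => Complex.Gammaℝ (s + 1)) from rfl, h]
    simp [one_add_one_eq_two, hG2]
  -- functional equation
  have hFE := hprim.completedLFunction_one_sub
  have hE1 : Λ 0 = (q : ℂ) ^ ((1:ℂ) - 1/2) * W * M 1 := by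
    have := hFE 1
    rwa [sub_self] at this
  -- derivative of the functional equation at s = 1
  have hΛdiff : Differentiable ℂ Λ := DirichletCharacter.differentiable_completedLFunction hχ
  have hMd : DifferentiableAt ℂ M 1 :=
    (DirichletCharacter.differentiable_completedLFunction hχinv) 1
  have hlhs : HasDerivAt (fun s : ℂ => Λ (1 - s)) (deriv Λ 0 * (-1)) 1 := by
    have h0 : HasDerivAt (fun s : ℂ => 1 - s) (-1) 1 := by
      simpa using (hasDerivAt_id (1:ℂ)).const_sub 1
    have h1 : HasDerivAt Λ (deriv Λ 0) ((fun s : ℂ => 1 - s) 1) := by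
      rw [show ((fun s : ℂ => 1 - s) 1) = 0 by norm_num]
      exact (hΛdiff 0).hasDerivAt
    exact HasDerivAt.comp (h := fun s : ℂ => 1 - s) (h₂ := Λ) 1 h1 h0
  have hc : HasDerivAt (fun s : ℂ => (q:ℂ) ^ (s - 1/2))
      ((q:ℂ) ^ ((1:ℂ) - 1/2) * Complex.log q * 1) 1 :=
    ((hasDerivAt_id (1:ℂ)).sub_const (1/2)).const_cpow (Or.inl hq0)
  have hrhs := (hc.mul_const W).mul hMd.hasDerivAt
  have hDeq : deriv (fun s : ℂ => Λ (1 - s)) 1 =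
      deriv (fun s : ℂ => (q:ℂ) ^ (s - 1/2) * W * M s) 1 :=
    Filter.EventuallyEq.deriv_eq (Filter.Eventually.of_forall fun s => hFE s)
  have hE2 : deriv Λ 0 * (-1) =
      (q:ℂ) ^ ((1:ℂ) - 1/2) * Complex.log q * 1 * W * M 1 +
        (q:ℂ) ^ ((1:ℂ) - 1/2) * W * deriv M 1 := by
    rw [← hlhs.deriv, hDeq, show (fun s : ℂ => (q:ℂ) ^ (s - 1/2) * W * M s) = (fun y : ℂ => (q:ℂ) ^ (y - 1/2) * W) * M from rfl, hrhs.deriv]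
  -- nonvanishing of L 0
  have hu : L 0 ≠ 0 := by
    rw [← hΛ0, hE1, hM1]
    exact mul_ne_zero (mul_ne_zero hPne hWne) (mul_ne_zero hv (inv_ne_zero hπ))
  -- the constants identity
  have hreal : Real.log (2 * Real.pi / q) + Real.eulerMascheroniConstant =
      (Real.eulerMascheroniConstant + Real.log (4 * Real.pi)) / 2 - Real.log q +
        (Real.eulerMascheroniConstant + Real.log Real.pi) / 2 := by
    have hq0' : (q : ℝ) ≠ 0 := Nat.cast_ne_zero.mpr (NeZero.ne q)
    have h2 : Real.log (4 * Real.pi) + Real.log Real.pi = 2 * Real.log (2 * Real.pi) := by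
      rw [← Real.log_mul (by positivity) Real.pi_ne_zero,
        show (4 * Real.pi) * Real.pi = (2 * Real.pi) ^ 2 by ring, Real.log_pow]
      push_cast; ring
    rw [Real.log_div (by positivity) hq0']
    linarith [h2]
  have hc12 : Complex.log (2 * Real.pi / q) + γ' = -c1 - Complex.log q - Real.pi * c2 := by
    rw [hc1, hc2, hγ',
      show ((2:ℂ) * Real.pi / q) = (((2 * Real.pi / q : ℝ)) : ℂ) by push_cast; ring,
      show ((4:ℂ) * Real.pi) = (((4 * Real.pi : ℝ)) : ℂ) by push_cast; ring,
      ← Complex.ofReal_log (by positivity : (0:ℝ) ≤ 2 * Real.pi / q),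
      ← Complex.ofReal_log (by positivity : (0:ℝ) ≤ 4 * Real.pi),
      ← Complex.ofReal_log Real.pi_pos.le]
    have hrealC := congrArg (fun x : ℝ => (x : ℂ)) hreal
    simp only [Complex.ofReal_add, Complex.ofReal_sub, Complex.ofReal_div,
      Complex.ofReal_ofNat] at hrealC
    rw [Complex.natCast_log] at hrealC
    field_simp
    ring_nf
    ring_nf at hrealC
    linear_combination 2 * hrealC
  -- final algebra
  have hππ : (Real.pi : ℂ) * ((Real.pi : ℂ))⁻¹ = 1 := mul_inv_cancel₀ hπ
  rw [hΛ0, hM1] at hE1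
  rw [hderivΛ0, hM1, hderivM1] at hE2
  rw [eq_sub_iff_add_eq, div_add_div _ _ hu hv, div_eq_iff (mul_ne_zero hu hv)]
  linear_combination (-(L₁ 1)) * hE2 +
      (Complex.log q * L₁ 1 + deriv L₁ 1 + c2 * L₁ 1 * Real.pi) * hE1 +
      (c2 * ((q:ℂ) ^ ((1:ℂ) - 1/2) * W) * (L₁ 1) ^ 2) * hππ -
      (L 0 * L₁ 1) * hc12
end

section
/- For every x > 0, the series S(x) := 2γ₁x + (log x)² + Σ_{m=1}^{∞} ( (log(x+m))² − (log m)² − 2x (log m)/m ) converges, where γ₁ is the first Stieltjes constant. -/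
open Real

lemma log_one_add_le_self {t : ℝ} (ht : 0 ≤ t) : Real.log (1 + t) ≤ t := by
  have := Real.log_le_sub_one_of_pos (x := 1 + t) (by linarith)
  linarith

lemma self_sub_sq_le_log_one_add {t : ℝ} (ht : 0 ≤ t) :
    t - t ^ 2 ≤ Real.log (1 + t) := by
  have h1 : (0:ℝ) < 1 + t := by linarith
  have h2 := Real.log_le_sub_one_of_pos (x := (1 + t)⁻¹) (by positivity)
  rw [Real.log_inv] at h2
  have h3 : (1 + t)⁻¹ - 1 = -(t / (1 + t)) := by field_simp; ring
  have h4 : t / (1 + t) ≤ Real.log (1 + t) := by rw [h3] at h2; linarith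
  have h5 : t - t ^ 2 ≤ t / (1 + t) := by
    rw [le_div_iff₀ h1]; nlinarith
  linarith

lemma deninger_term_bound (x : ℝ) (hx : 0 < x) (n : ℕ) (hn : 1 ≤ n) :
    |Real.log (x + n) ^ 2 - Real.log n ^ 2 - 2 * x * Real.log n / n| ≤
      (5 * x ^ 2) * (Real.sqrt n / (n:ℝ) ^ 2) := by
  set N : ℝ := (n : ℝ) with hN
  have hN1 : (1:ℝ) ≤ N := by rw [hN]; exact_mod_cast hn
  have hN0 : (0:ℝ) < N := by linarith
  set t : ℝ := x / N with hT
  have ht : 0 ≤ t := by positivity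
  set u : ℝ := Real.log (1 + t) with hu
  have hlog : Real.log (x + N) = Real.log N + u := by
    have : x + N = N * (1 + t) := by
      have hNt : N * t = x := by rw [hT]; field_simp [ne_of_gt hN0]
      linear_combination -hNt
    rw [this, Real.log_mul (ne_of_gt hN0) (by positivity)]
  have hL : 0 ≤ Real.log N := Real.log_nonneg hN1
  have hLsq : Real.log N ≤ 2 * Real.sqrt N := by
    have h1 : Real.log N = 2 * Real.log (Real.sqrt N) := by
      rw [Real.log_sqrt hN0.le]; ring
    have h2 : Real.log (Real.sqrt N) ≤ Real.sqrt N - 1 :=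
      Real.log_le_sub_one_of_pos (Real.sqrt_pos.2 hN0)
    nlinarith [Real.sqrt_nonneg N]
  have hu_le : u ≤ t := log_one_add_le_self ht
  have hu_ge : t - t ^ 2 ≤ u := self_sub_sq_le_log_one_add ht
  have hu0 : 0 ≤ u := Real.log_nonneg (by linarith)
  have hterm : Real.log (x + N) ^ 2 - Real.log N ^ 2 - 2 * x * Real.log N / N
      = 2 * Real.log N * (u - t) + u ^ 2 := by
    rw [hlog, show 2 * x * Real.log N / N = 2 * Real.log N * t by
      rw [hT]; field_simp]
    ring
  rw [hterm]
  have hsqrt1 : (1:ℝ) ≤ Real.sqrt N := by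
    rw [show (1:ℝ) = Real.sqrt 1 by simp]
    exact Real.sqrt_le_sqrt hN1
  have ht2 : t ^ 2 = x ^ 2 / N ^ 2 := by rw [hT]; field_simp
  have habs : |2 * Real.log N * (u - t) + u ^ 2| ≤
      2 * Real.log N * t ^ 2 + t ^ 2 := by
    have h1 : |u - t| ≤ t ^ 2 := by rw [abs_le]; constructor <;> nlinarith
    have h2 : u ^ 2 ≤ t ^ 2 := by nlinarith
    calc |2 * Real.log N * (u - t) + u ^ 2|
        ≤ |2 * Real.log N * (u - t)| + |u ^ 2| := abs_add_le _ _
      _ = 2 * Real.log N * |u - t| + u ^ 2 := by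
          rw [abs_mul, abs_of_nonneg (by linarith : (0:ℝ) ≤ 2 * Real.log N),
            abs_of_nonneg (sq_nonneg u)]
      _ ≤ 2 * Real.log N * t ^ 2 + t ^ 2 := by nlinarith
  refine habs.trans ?_
  rw [ht2]
  have hd : 0 ≤ x ^ 2 / N ^ 2 := by positivity
  have h1 : 2 * Real.log N * (x ^ 2 / N ^ 2) ≤ 4 * Real.sqrt N * (x ^ 2 / N ^ 2) :=
    mul_le_mul_of_nonneg_right (by linarith) hd
  have h2 : 1 * (x ^ 2 / N ^ 2) ≤ Real.sqrt N * (x ^ 2 / N ^ 2) :=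
    mul_le_mul_of_nonneg_right hsqrt1 hd
  have e : 5 * x ^ 2 * (Real.sqrt N / N ^ 2) = 5 * (Real.sqrt N * (x ^ 2 / N ^ 2)) := by
    ring
  linarith

theorem deninger_S_series_summable (x : ℝ) (hx : 0 < x) :
    Summable (fun m : ℕ =>
      (Real.log (x + (m + 1))) ^ 2 - (Real.log (m + 1)) ^ 2 -
        2 * x * Real.log (m + 1) / (m + 1)) := by
  have hmaj : Summable (fun m : ℕ => (5 * x ^ 2) *
      (Real.sqrt (m + 1) / ((m:ℝ) + 1) ^ 2)) := by
    apply Summable.mul_left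
    have hbase : Summable (fun n : ℕ => 1 / (n:ℝ) ^ ((3:ℝ)/2)) :=
      (Real.summable_one_div_nat_rpow).2 (by norm_num)
    have := (summable_nat_add_iff 1).2 hbase
    refine this.congr fun m => ?_
    have hM : (0:ℝ) < (m:ℝ) + 1 := by positivity
    push_cast
    rw [Real.sqrt_eq_rpow,
      show ((m:ℝ) + 1) ^ 2 = ((m:ℝ) + 1) ^ ((2:ℝ)) from by
        rw [← Real.rpow_natCast ((m:ℝ)+1) 2]; norm_num,
      ← Real.rpow_sub hM, one_div, ← Real.rpow_neg hM.le]
    norm_num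
  refine Summable.of_norm_bounded hmaj fun m => ?_
  have := deninger_term_bound x hx (m + 1) (Nat.le_add_left 1 m)
  push_cast at this ⊢
  simpa [Real.norm_eq_abs] using this
end

section
/- For an odd prime q, Σ_{a=1}^{q-1} T(a/q) = (q/2)(log q)² + γ q log q, where T(x) = −(log x)/x − Σ_{m=1}^{∞}( log(x+m)/(x+m) − (log m)/m ) and γ is the Euler–Mascheroni constant. -/
open Finset Real Filter

/-- The function `T(x) = -(log x)/x - Σ_{m≥1} (log(x+m)/(x+m) - (log m)/m)`. -/
noncomputable def TFun (x : ℝ) : ℝ :=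
  -(Real.log x / x) -
    ∑' m : ℕ, (Real.log (x + (m + 1)) / (x + (m + 1)) - Real.log (m + 1) / (m + 1))

namespace SumTAux


noncomputable def f (t : ℝ) : ℝ := Real.log t / t

lemma hasDerivAt_f {t : ℝ} (ht : 0 < t) :
    HasDerivAt f ((1 - Real.log t) / t ^ 2) t := by
  have h := (Real.hasDerivAt_log ht.ne').div (hasDerivAt_id t) ht.ne'
  refine h.congr_deriv ?_
  simp only [id]
  field_simp

lemma log_le_two_sqrt {t : ℝ} (ht : 0 ≤ t) : Real.log t ≤ 2 * t ^ ((1:ℝ)/2) := by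
  have := Real.log_le_rpow_div ht (by norm_num : (0:ℝ) < 1/2)
  linarith [this]

lemma abs_f_sub_le {x : ℝ} (hx : 0 < x) (m : ℕ) :
    |f (x + (m + 1)) - f (m + 1)| ≤
      x * (1 + Real.log (x + 1) + 2) * ((m : ℝ) + 1) ^ (-(3:ℝ)/2) := by
  set a : ℝ := (m : ℝ) + 1 with ha
  have ha1 : (1:ℝ) ≤ a := by
    have : (0:ℝ) ≤ (m:ℝ) := Nat.cast_nonneg m
    linarith
  have ha0 : (0:ℝ) < a := by linarith
  have hL : (0:ℝ) ≤ Real.log (x+1) := Real.log_nonneg (by linarith)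
  have hC0 : (0:ℝ) ≤ 1 + Real.log (x+1) + 2 * a ^ ((1:ℝ)/2) := by positivity
  have key : ∀ y ∈ Set.Icc a (a + x), |f y - f a| ≤
      ((1 + Real.log (x+1) + 2 * a ^ ((1:ℝ)/2)) / a ^ 2) * (y - a) := by
    have hder : ∀ y ∈ Set.Icc a (a + x),
        HasDerivWithinAt f ((1 - Real.log y) / y ^ 2) (Set.Icc a (a + x)) y := by
      intro y hy
      exact (hasDerivAt_f (lt_of_lt_of_le ha0 hy.1)).hasDerivWithinAt
    have hbound : ∀ y ∈ Set.Ico a (a + x),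
        ‖(1 - Real.log y) / y ^ 2‖ ≤ (1 + Real.log (x+1) + 2 * a ^ ((1:ℝ)/2)) / a ^ 2 := by
      intro y hy
      have hy1 : a ≤ y := hy.1
      have hy0 : 0 < y := lt_of_lt_of_le ha0 hy1
      have hylog : 0 ≤ Real.log y := Real.log_nonneg (le_trans ha1 hy1)
      have hle : Real.log y ≤ Real.log (x + 1) + 2 * a ^ ((1:ℝ)/2) := by
        have h1 : y ≤ (x + 1) * a := by nlinarith [hy.2.le]
        calc Real.log y ≤ Real.log ((x+1) * a) := Real.log_le_log hy0 h1
          _ = Real.log (x+1) + Real.log a := Real.log_mul (by linarith) ha0.ne'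
          _ ≤ Real.log (x+1) + 2 * a ^ ((1:ℝ)/2) := by
              linarith [log_le_two_sqrt ha0.le]
      rw [Real.norm_eq_abs, abs_div, abs_of_nonneg (by positivity : (0:ℝ) ≤ y ^ 2)]
      have habs : |1 - Real.log y| ≤ 1 + Real.log (x+1) + 2 * a ^ ((1:ℝ)/2) :=
        abs_le.mpr ⟨by nlinarith, by nlinarith⟩
      have hy2 : a ^ 2 ≤ y ^ 2 := by nlinarith
      calc |1 - Real.log y| / y ^ 2
          ≤ (1 + Real.log (x+1) + 2 * a ^ ((1:ℝ)/2)) / y ^ 2 :=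
            div_le_div_of_nonneg_right habs (by positivity) |>.trans_eq rfl
        _ ≤ (1 + Real.log (x+1) + 2 * a ^ ((1:ℝ)/2)) / a ^ 2 :=
            div_le_div_of_nonneg_left hC0 (by positivity) hy2
    intro y hy
    simpa using norm_image_sub_le_of_norm_deriv_le_segment' hder hbound y hy
  have h1 := key (a + x) ⟨by linarith, le_refl _⟩
  have hsq : a ^ ((1:ℝ)/2) / a ^ 2 = a ^ (-(3:ℝ)/2) := by
    rw [← Real.rpow_natCast a 2, ← Real.rpow_sub ha0]
    norm_num
  have hsq2 : (1:ℝ) / a ^ 2 ≤ a ^ (-(3:ℝ)/2) := by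
    have e : (1:ℝ) / a ^ 2 = a ^ (-(2:ℝ)) := by
      rw [Real.rpow_neg ha0.le, one_div, ← Real.rpow_natCast a 2]
      norm_num
    rw [e]
    exact Real.rpow_le_rpow_of_exponent_le ha1 (by norm_num)
  have hs0 : (0:ℝ) ≤ a ^ (-(3:ℝ)/2) := Real.rpow_nonneg ha0.le _
  have h2 : ((1 + Real.log (x+1) + 2 * a ^ ((1:ℝ)/2)) / a ^ 2) * (a + x - a)
      ≤ x * (1 + Real.log (x + 1) + 2) * a ^ (-(3:ℝ)/2) := by
    have e1 : ((1 + Real.log (x+1) + 2 * a ^ ((1:ℝ)/2)) / a ^ 2) * (a + x - a)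
        = x * ((1 + Real.log (x+1)) * (1 / a ^ 2) + 2 * (a ^ ((1:ℝ)/2) / a ^ 2)) := by
      ring
    rw [e1, hsq]
    have : (1 + Real.log (x+1)) * (1 / a ^ 2) + 2 * a ^ (-(3:ℝ)/2)
        ≤ (1 + Real.log (x+1)) * a ^ (-(3:ℝ)/2) + 2 * a ^ (-(3:ℝ)/2) := by
      have := mul_le_mul_of_nonneg_left hsq2 (by linarith : (0:ℝ) ≤ 1 + Real.log (x+1))
      linarith
    calc x * ((1 + Real.log (x+1)) * (1 / a ^ 2) + 2 * a ^ (-(3:ℝ)/2))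
        ≤ x * ((1 + Real.log (x+1)) * a ^ (-(3:ℝ)/2) + 2 * a ^ (-(3:ℝ)/2)) :=
          mul_le_mul_of_nonneg_left this hx.le
      _ = x * (1 + Real.log (x + 1) + 2) * a ^ (-(3:ℝ)/2) := by ring
  have e2 : x + a = a + x := by ring
  calc |f (x + (m+1)) - f (m+1)| = |f (a + x) - f a| := by rw [ha, ← e2]
    _ ≤ _ := h1
    _ ≤ _ := h2

lemma summable_g {x : ℝ} (hx : 0 < x) :
    Summable (fun m : ℕ => f (x + (m + 1)) - f (m + 1)) := by
  have hmaj : Summable (fun m : ℕ => x * (1 + Real.log (x + 1) + 2) * ((m : ℝ) + 1) ^ (-(3:ℝ)/2)) := by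
    apply Summable.mul_left
    have h := (Real.summable_one_div_nat_rpow (p := (3:ℝ)/2)).mpr (by norm_num)
    have h2 := (summable_nat_add_iff 1).mpr h
    apply h2.congr
    intro m
    push_cast
    rw [neg_div, Real.rpow_neg (by positivity), one_div]
  exact Summable.of_norm_bounded hmaj (fun m => abs_f_sub_le hx m)

lemma continuousOn_f {s : Set ℝ} (hs : ∀ t ∈ s, (0:ℝ) < t) : ContinuousOn f s := by
  apply ContinuousOn.div
  · exact Real.continuousOn_log.mono (fun t ht => (hs t ht).ne')
  · exact continuousOn_id
  · exact fun t ht => (hs t ht).ne'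

lemma antitoneOn_f {c : ℝ} (hc : 3 ≤ c) : AntitoneOn f (Set.Ici c) := by
  have hc0 : (0:ℝ) < c := by linarith
  apply antitoneOn_of_deriv_nonpos (convex_Ici c)
  · exact continuousOn_f (fun t ht => lt_of_lt_of_le hc0 ht)
  · intro t ht
    rw [interior_Ici] at ht
    have ht0 : 0 < t := by have := lt_of_le_of_lt hc ht; linarith
    exact (hasDerivAt_f ht0).differentiableAt.differentiableWithinAt
  · intro t ht
    rw [interior_Ici] at ht
    have ht3 : 3 < t := lt_of_le_of_lt hc ht
    have ht0 : 0 < t := by linarith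
    rw [(hasDerivAt_f ht0).deriv]
    have hlog : 1 ≤ Real.log t := by
      rw [Real.le_log_iff_exp_le ht0]
      calc Real.exp 1 ≤ 2.7182818286 := Real.exp_one_lt_d9.le
        _ ≤ t := by linarith
    apply div_nonpos_of_nonpos_of_nonneg
    · linarith
    · positivity

lemma integral_f {a b : ℝ} (ha : 1 ≤ a) (hab : a ≤ b) :
    ∫ t in a..b, f t = (Real.log b) ^ 2 / 2 - (Real.log a) ^ 2 / 2 := by
  have huIcc : Set.uIcc a b = Set.Icc a b := Set.uIcc_of_le hab
  have hpos : ∀ t ∈ Set.uIcc a b, (0:ℝ) < t := by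
    rw [huIcc]; intro t ht; linarith [ht.1]
  apply intervalIntegral.integral_eq_sub_of_hasDerivAt
  · intro t ht
    have ht0 : 0 < t := hpos t ht
    have h := ((Real.hasDerivAt_log ht0.ne').pow 2).div_const 2
    refine h.congr_deriv ?_
    rw [f]
    field_simp
    ring
  · exact (continuousOn_f hpos).intervalIntegrable

noncomputable def A (N : ℕ) : ℝ := ∑ n ∈ Icc 1 N, Real.log n / n

lemma tendsto_f_atTop : Tendsto f atTop (nhds 0) :=
  Real.isLittleO_log_id_atTop.tendsto_div_nhds_zero

lemma tendsto_f_nat : Tendsto (fun n : ℕ => f n) atTop (nhds 0) :=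
  tendsto_f_atTop.comp tendsto_natCast_atTop_atTop

lemma f_nonneg {t : ℝ} (ht : 1 ≤ t) : 0 ≤ f t :=
  div_nonneg (Real.log_nonneg ht) (by linarith)

lemma A_diff {M N : ℕ} (h : M ≤ N) :
    A N - A M = ∑ x ∈ Ico M N, f ((x + 1 : ℕ) : ℝ) := by
  have h1 : A M + ∑ n ∈ Ioc M N, f (n : ℝ) = A N := by
    rw [A, A, show Icc 1 M = Ioc 0 M from Finset.Icc_add_one_left_eq_Ioc 0 M,
      show Icc 1 N = Ioc 0 N from Finset.Icc_add_one_left_eq_Ioc 0 N]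
    exact Finset.sum_Ioc_consecutive _ (Nat.zero_le M) h
  have h2 : ∑ n ∈ Ioc M N, f (n : ℝ) = ∑ x ∈ Ico M N, f ((x + 1 : ℕ) : ℝ) := by
    rw [← Finset.Ico_add_one_add_one_eq_Ioc]
    rw [Finset.sum_Ico_eq_sum_range, Finset.sum_Ico_eq_sum_range]
    simp only [Nat.add_sub_add_right]
    apply Finset.sum_congr rfl
    intro i _
    congr 1
    push_cast
    ring
  linarith [h1, h2]

lemma tele {M N : ℕ} (h : M ≤ N) :
    ∑ x ∈ Ico M N, (f (x : ℝ) - f ((x + 1 : ℕ) : ℝ)) = f (M : ℝ) - f (N : ℝ) := by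
  rw [Finset.sum_Ico_eq_sum_range]
  have h0 := Finset.sum_range_sub' (f := fun i : ℕ => f ((M + i : ℕ) : ℝ)) (N - M)
  calc ∑ i ∈ range (N - M), (f ((M + i : ℕ) : ℝ) - f ((M + i + 1 : ℕ) : ℝ))
      = f ((M + 0 : ℕ) : ℝ) - f ((M + (N - M) : ℕ) : ℝ) := by
        rw [← h0]
        apply Finset.sum_congr rfl
        intro i _
        norm_num [Nat.add_assoc]
    _ = f (M : ℝ) - f (N : ℝ) := by
        rw [Nat.add_zero, Nat.add_sub_cancel' h]

lemma LT_tendsto (q : ℕ) (hq : 0 < q) :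
    Tendsto (fun M : ℕ => (A (q * (M + 1)) - A M)
        - ((Real.log (q * (M + 1) : ℕ)) ^ 2 / 2 - (Real.log M) ^ 2 / 2))
      atTop (nhds 0) := by
  have hneg : Tendsto (fun M : ℕ => -(f (M : ℝ))) atTop (nhds 0) := by
    simpa using tendsto_f_nat.neg
  apply tendsto_of_tendsto_of_tendsto_of_le_of_le' hneg tendsto_const_nhds
  · filter_upwards [eventually_ge_atTop 3] with M hM
    set N := q * (M + 1) with hN
    have hMN : M ≤ N := by
      calc M ≤ M + 1 := Nat.le_succ M
        _ ≤ q * (M + 1) := Nat.le_mul_of_pos_left _ hq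
    have hM3 : (3:ℝ) ≤ (M:ℝ) := by exact_mod_cast hM
    have hM1 : (1:ℝ) ≤ (M:ℝ) := by linarith
    have hMNr : (M:ℝ) ≤ (N:ℝ) := by exact_mod_cast hMN
    have hf : AntitoneOn f (Set.Icc (M:ℝ) (N:ℝ)) :=
      (antitoneOn_f hM3).mono (fun t ht => ht.1)
    have h1 := AntitoneOn.sum_le_integral_Ico hMN hf
    have h2 := AntitoneOn.integral_le_sum_Ico hMN hf
    have h3 : ∑ x ∈ Ico M N, f (x : ℝ) - ∑ x ∈ Ico M N, f ((x + 1 : ℕ) : ℝ)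
        = f (M : ℝ) - f (N : ℝ) := by
      rw [← Finset.sum_sub_distrib]
      exact tele hMN
    have h4 : ∫ t in (M:ℝ)..(N:ℝ), f t
        = (Real.log N) ^ 2 / 2 - (Real.log M) ^ 2 / 2 := integral_f hM1 hMNr
    have h5 : A N - A M = ∑ x ∈ Ico M N, f ((x + 1 : ℕ) : ℝ) := A_diff hMN
    have hfN : 0 ≤ f (N : ℝ) := f_nonneg (le_trans hM1 hMNr)
    rw [h5]
    rw [h4] at h1 h2
    linarith
  · filter_upwards [eventually_ge_atTop 3] with M hM
    set N := q * (M + 1) with hN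
    have hMN : M ≤ N := by
      calc M ≤ M + 1 := Nat.le_succ M
        _ ≤ q * (M + 1) := Nat.le_mul_of_pos_left _ hq
    have hM3 : (3:ℝ) ≤ (M:ℝ) := by exact_mod_cast hM
    have hM1 : (1:ℝ) ≤ (M:ℝ) := by linarith
    have hMNr : (M:ℝ) ≤ (N:ℝ) := by exact_mod_cast hMN
    have hf : AntitoneOn f (Set.Icc (M:ℝ) (N:ℝ)) :=
      (antitoneOn_f hM3).mono (fun t ht => ht.1)
    have h1 := AntitoneOn.sum_le_integral_Ico hMN hf
    have h4 : ∫ t in (M:ℝ)..(N:ℝ), f t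
        = (Real.log N) ^ 2 / 2 - (Real.log M) ^ 2 / 2 := integral_f hM1 hMNr
    have h5 : A N - A M = ∑ x ∈ Ico M N, f ((x + 1 : ℕ) : ℝ) := A_diff hMN
    rw [h5]
    rw [h4] at h1
    linarith

lemma sq_log_diff :
    Tendsto (fun M : ℕ => (Real.log ((M:ℝ) + 1)) ^ 2 - (Real.log (M:ℝ)) ^ 2)
      atTop (nhds 0) := by
  have hup : Tendsto (fun M : ℕ => 4 * f ((M:ℝ) + 1)) atTop (nhds 0) := by
    have h1 : Tendsto (fun M : ℕ => (M:ℝ) + 1) atTop atTop :=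
      tendsto_atTop_add_const_right _ _ tendsto_natCast_atTop_atTop
    have := (tendsto_f_atTop.comp h1).const_mul (4:ℝ)
    simpa using this
  apply tendsto_of_tendsto_of_tendsto_of_le_of_le' tendsto_const_nhds hup
  · filter_upwards [eventually_ge_atTop 1] with M hM
    have hM1 : (1:ℝ) ≤ (M:ℝ) := by exact_mod_cast hM
    have huv : Real.log (M:ℝ) ≤ Real.log ((M:ℝ) + 1) :=
      Real.log_le_log (by linarith) (by linarith)
    have hv : 0 ≤ Real.log (M:ℝ) := Real.log_nonneg hM1
    nlinarith
  · filter_upwards [eventually_ge_atTop 1] with M hM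
    have hM1 : (1:ℝ) ≤ (M:ℝ) := by exact_mod_cast hM
    have hM0 : (0:ℝ) < (M:ℝ) := by linarith
    set u := Real.log ((M:ℝ) + 1) with hu
    set v := Real.log (M:ℝ) with hv
    have huv : v ≤ u := Real.log_le_log hM0 (by linarith)
    have hv0 : 0 ≤ v := Real.log_nonneg hM1
    have hu0 : 0 ≤ u := le_trans hv0 huv
    have hdiff : u - v ≤ 1 / (M:ℝ) := by
      have h1 : u - v = Real.log (((M:ℝ) + 1) / (M:ℝ)) := by
        rw [Real.log_div (by linarith) hM0.ne']
      rw [h1]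
      have h2 := Real.log_le_sub_one_of_pos (show (0:ℝ) < ((M:ℝ)+1)/(M:ℝ) by positivity)
      have h3 : ((M:ℝ) + 1) / (M:ℝ) - 1 = 1 / (M:ℝ) := by field_simp; ring
      linarith
    have hstep1 : u ^ 2 - v ^ 2 ≤ 2 * u / (M:ℝ) := by
      have : u ^ 2 - v ^ 2 ≤ (1 / (M:ℝ)) * (2 * u) := by nlinarith
      calc u ^ 2 - v ^ 2 ≤ (1 / (M:ℝ)) * (2 * u) := this
        _ = 2 * u / (M:ℝ) := by ring
    have hstep2 : 2 * u / (M:ℝ) ≤ 4 * u / ((M:ℝ) + 1) := by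
      rw [div_le_div_iff₀ hM0 (by linarith : (0:ℝ) < (M:ℝ)+1)]
      nlinarith
    have hf : 4 * f ((M:ℝ) + 1) = 4 * u / ((M:ℝ) + 1) := by
      rw [f]
      ring
    rw [hf]
    linarith

lemma H_tendsto :
    Tendsto (fun N : ℕ => (∑ n ∈ Icc 1 N, ((n:ℝ))⁻¹) - Real.log N) atTop
      (nhds Real.eulerMascheroniConstant) := by
  apply Real.tendsto_harmonic_sub_log.congr
  intro N
  congr 1
  rw [harmonic_eq_sum_Icc]
  push_cast
  rfl


lemma TFun_eq (x : ℝ) : TFun x = -(f x) - ∑' m : ℕ, (f (x + (m + 1)) - f (m + 1)) := rfl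

lemma tendsto_TFun {x : ℝ} (hx : 0 < x) :
    Tendsto (fun M : ℕ => -(f x) - ∑ m ∈ range M, (f (x + (m + 1)) - f (m + 1)))
      atTop (nhds (TFun x)) := by
  rw [TFun_eq]
  exact ((summable_g hx).hasSum.tendsto_sum_nat).const_sub _

lemma TFun_one : TFun 1 = 0 := by
  have hsum : Tendsto (fun M : ℕ => ∑ m ∈ range M, (f (1 + ((m:ℝ) + 1)) - f ((m:ℝ) + 1)))
      atTop (nhds (∑' m : ℕ, (f (1 + ((m:ℝ) + 1)) - f ((m:ℝ) + 1)))) :=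
    (summable_g one_pos).hasSum.tendsto_sum_nat
  have heq : ∀ M : ℕ, ∑ m ∈ range M, (f (1 + ((m:ℝ) + 1)) - f ((m:ℝ) + 1))
      = f ((M:ℝ) + 1) - f 1 := by
    intro M
    have h := Finset.sum_range_sub (f := fun i : ℕ => f ((i:ℝ) + 1)) M
    push_cast at h
    rw [show (0:ℝ) + 1 = 1 by norm_num] at h
    rw [← h]
    apply Finset.sum_congr rfl
    intro m _
    rw [show (1:ℝ) + ((m:ℝ) + 1) = (m:ℝ) + 1 + 1 by ring]
  have hlim : Tendsto (fun M : ℕ => f ((M:ℝ) + 1) - f 1) atTop (nhds 0) := by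
    have h1 : Tendsto (fun M : ℕ => (M:ℝ) + 1) atTop atTop :=
      tendsto_atTop_add_const_right _ _ tendsto_natCast_atTop_atTop
    have := tendsto_f_atTop.comp h1
    simpa [f, Function.comp_def] using this
  have htsum : (∑' m : ℕ, (f (1 + ((m:ℝ) + 1)) - f ((m:ℝ) + 1))) = 0 :=
    tendsto_nhds_unique (hsum.congr fun M => (heq M)) hlim
  rw [TFun_eq, htsum]
  simp [f]


lemma step2 (q : ℕ) (hq : 0 < q) (M : ℕ) :
    ∑ a ∈ Icc 1 q, ∑ m ∈ range (M + 1), f ((a : ℝ) / q + m)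
      = ∑ n ∈ Icc 1 (q * (M + 1)), f ((n : ℝ) / q) := by
  have hq0 : (q : ℝ) ≠ 0 := Nat.cast_ne_zero.mpr hq.ne'
  induction M with
  | zero => simp
  | succ M ih =>
    have h1 : q * (M + 1) ≤ q * (M + 2) := Nat.mul_le_mul_left _ (by omega)
    have hIcc : ∀ N : ℕ, Icc 1 N = Ioc 0 N := fun N => Finset.Icc_add_one_left_eq_Ioc 0 N
    have hre : ∑ n ∈ Ioc (q * (M + 1)) (q * (M + 2)), f ((n : ℝ) / q)
        = ∑ a ∈ Icc 1 q, f ((a : ℝ) / q + ((M : ℝ) + 1)) := by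
      have hmap : Ioc (q * (M + 1)) (q * (M + 2))
          = (Ioc 0 q).map (addLeftEmbedding (q * (M + 1))) := by
        rw [Finset.map_add_left_Ioc]
        congr 1
      rw [hmap, Finset.sum_map, hIcc]
      apply Finset.sum_congr rfl
      intro a ha
      have ha1 : 0 < a := (Finset.mem_Ioc.mp ha).1
      simp only [addLeftEmbedding_apply]
      congr 1
      push_cast
      field_simp
      ring
    calc ∑ a ∈ Icc 1 q, ∑ m ∈ range (M + 2), f ((a : ℝ) / q + m)
        = ∑ a ∈ Icc 1 q, (∑ m ∈ range (M + 1), f ((a : ℝ) / q + m)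
            + f ((a : ℝ) / q + ((M : ℝ) + 1))) := by
          apply Finset.sum_congr rfl
          intro a _
          rw [Finset.sum_range_succ]
          push_cast
          ring_nf
      _ = ∑ n ∈ Icc 1 (q * (M + 1)), f ((n : ℝ) / q)
            + ∑ n ∈ Ioc (q * (M + 1)) (q * (M + 2)), f ((n : ℝ) / q) := by
          rw [Finset.sum_add_distrib, ih, hre]
      _ = ∑ n ∈ Icc 1 (q * (M + 2)), f ((n : ℝ) / q) := by
          rw [hIcc, hIcc, Finset.sum_Ioc_consecutive _ (Nat.zero_le _) h1]

lemma step3 (q : ℕ) (hq : 0 < q) (N : ℕ) :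
    ∑ n ∈ Icc 1 N, f ((n : ℝ) / q)
      = q * (∑ n ∈ Icc 1 N, Real.log n / n) - q * Real.log q * (∑ n ∈ Icc 1 N, (n : ℝ)⁻¹) := by
  have hq0 : (q : ℝ) ≠ 0 := Nat.cast_ne_zero.mpr hq.ne'
  rw [Finset.mul_sum, Finset.mul_sum, ← Finset.sum_sub_distrib]
  apply Finset.sum_congr rfl
  intro n hn
  have hn1 : 1 ≤ n := (Finset.mem_Icc.mp hn).1
  have hn0 : (n : ℝ) ≠ 0 := Nat.cast_ne_zero.mpr (by omega)
  rw [f, Real.log_div hn0 hq0]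
  field_simp

lemma A_range (M : ℕ) : A M = ∑ m ∈ range M, f ((m:ℝ) + 1) := by
  rw [A, ← Finset.Ico_add_one_right_eq_Icc, Finset.sum_Ico_eq_sum_range]
  apply Finset.sum_congr (by rw [Nat.add_sub_cancel])
  intro i _
  rw [f]
  push_cast
  rw [add_comm]


end SumTAux

open SumTAux in
theorem sum_T_eq (q : ℕ) (hq : q.Prime) (hodd : Odd q) :
    ∑ a ∈ Finset.Icc 1 (q - 1), TFun ((a : ℝ) / q) =
      (q : ℝ) / 2 * (Real.log q) ^ 2 + Real.eulerMascheroniConstant * q * Real.log q := by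
  have hq1 : 0 < q := hq.pos
  have hq0 : (q:ℝ) ≠ 0 := Nat.cast_ne_zero.mpr hq1.ne'
  have hq0' : (0:ℝ) < q := Nat.cast_pos.mpr hq1
  set γ := Real.eulerMascheroniConstant with hγ
  -- reduce to sum over Icc 1 q
  have e : (q - 1) + 1 = q := by omega
  have key := Finset.sum_Icc_succ_top (a := 1) (b := q - 1) (by omega)
    (fun a : ℕ => TFun ((a : ℝ) / q))
  rw [e] at key
  have hTq : TFun ((q:ℝ) / q) = 0 := by rw [div_self hq0]; exact TFun_one
  rw [hTq, add_zero] at key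
  rw [← key]
  -- the partial sums
  have htend1 : Tendsto (fun M : ℕ => ∑ a ∈ Icc 1 q,
      (-(f ((a:ℝ)/q)) - ∑ m ∈ range M, (f ((a:ℝ)/q + (m + 1)) - f (m + 1))))
      atTop (nhds (∑ a ∈ Icc 1 q, TFun ((a:ℝ)/q))) := by
    apply tendsto_finset_sum
    intro a ha
    have ha1 : 1 ≤ a := (Finset.mem_Icc.mp ha).1
    have hapos : 0 < (a:ℝ)/q := by
      apply div_pos _ hq0'
      exact_mod_cast Nat.cast_pos.mpr (by omega)
    exact tendsto_TFun hapos
  -- identify the partial sums with E M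
  have hE : ∀ M : ℕ, ∑ a ∈ Icc 1 q,
      (-(f ((a:ℝ)/q)) - ∑ m ∈ range M, (f ((a:ℝ)/q + (m + 1)) - f (m + 1)))
      = -((q:ℝ) * A (q * (M+1))) + (q:ℝ) * Real.log q * (∑ n ∈ Icc 1 (q*(M+1)), ((n:ℝ))⁻¹)
        + (q:ℝ) * A M := by
    intro M
    have e1 : ∀ a ∈ Icc 1 q, -(f ((a:ℝ)/q)) - ∑ m ∈ range M, (f ((a:ℝ)/q + (m + 1)) - f (m + 1))
        = -(∑ m ∈ range (M+1), f ((a:ℝ)/q + m)) + ∑ m ∈ range M, f ((m:ℝ) + 1) := by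
      intro a _
      rw [Finset.sum_range_succ' (fun m : ℕ => f ((a:ℝ)/q + m)) M]
      rw [Finset.sum_sub_distrib]
      simp only [Nat.cast_zero, add_zero, Nat.cast_add, Nat.cast_one]
      ring
    rw [Finset.sum_congr rfl e1, Finset.sum_add_distrib, Finset.sum_neg_distrib,
      Finset.sum_const, Nat.card_Icc]
    rw [step2 q hq1 M, step3 q hq1]
    rw [← A_range M, ← A]
    simp only [Nat.add_sub_cancel, nsmul_eq_mul]
    ring
  -- the limit of E M
  have hcomp : Tendsto (fun M : ℕ => q * (M + 1)) atTop atTop := by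
    apply tendsto_atTop_mono (fun M => ?_) tendsto_id
    calc id M = M := rfl
      _ ≤ M + 1 := Nat.le_succ M
      _ ≤ q * (M + 1) := Nat.le_mul_of_pos_left _ hq1
  have hT1 : Tendsto (fun M : ℕ => (∑ n ∈ Icc 1 (q*(M+1)), ((n:ℝ))⁻¹)
      - Real.log ((q*(M+1) : ℕ) : ℝ)) atTop (nhds γ) := H_tendsto.comp hcomp
  have hT2 := LT_tendsto q hq1
  have hT3 := sq_log_diff
  have combo := (((tendsto_const_nhds
      (x := (q:ℝ)/2 * (Real.log q)^2) (f := atTop (α := ℕ))).sub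
      (hT3.const_mul ((q:ℝ)/2))).add (hT1.const_mul ((q:ℝ) * Real.log q))).sub
      (hT2.const_mul (q:ℝ))
  simp only [mul_zero, sub_zero] at combo
  have htend2 : Tendsto (fun M : ℕ =>
      -((q:ℝ) * A (q * (M+1))) + (q:ℝ) * Real.log q * (∑ n ∈ Icc 1 (q*(M+1)), ((n:ℝ))⁻¹)
        + (q:ℝ) * A M) atTop
      (nhds ((q:ℝ)/2 * (Real.log q)^2 + γ * q * Real.log q)) := by
    have hval : (q:ℝ)/2 * (Real.log q)^2 + (q:ℝ) * Real.log q * γ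
        = (q:ℝ)/2 * (Real.log q)^2 + γ * q * Real.log q := by ring
    rw [← hval]
    apply combo.congr'
    filter_upwards [eventually_ge_atTop 1] with M hM
    have hlogN : Real.log ((q*(M+1) : ℕ) : ℝ) = Real.log q + Real.log ((M:ℝ) + 1) := by
      push_cast
      rw [Real.log_mul hq0 (by positivity)]
    rw [hlogN]
    ring
  exact tendsto_nhds_unique (htend1.congr hE) htend2
end

section
/- For an odd prime q, Σ_{a=1}^{q-1} S(a/q) = −ζ''(0)(q−1) − (log q)·log(2π) − (log q)²/2, where S(x) = 2γ₁x + (log x)² + Σ_{m=1}^{∞}((log(x+m))² − (log m)² − 2x(log m)/m) and ζ''(0) is the second derivative of the Riemann zeta function at 0. -/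
open Finset Real Filter

/-- Deninger's function `S`, depending on the first Stieltjes constant `γ₁`. -/
noncomputable def deningerS (γ₁ : ℝ) (x : ℝ) : ℝ :=
  2 * γ₁ * x + (Real.log x) ^ 2 +
    ∑' m : ℕ, ((Real.log (x + (m + 1))) ^ 2 - (Real.log (m + 1)) ^ 2 -
      2 * x * Real.log (m + 1) / (m + 1))

namespace DenAux

/-- partial sums of (log n)^2 -/
noncomputable def PP (N : ℕ) : ℝ := ∑ n ∈ Finset.range N, (Real.log (n+1))^2
noncomputable def QQ (N : ℕ) : ℝ := ∑ n ∈ Finset.range N, Real.log (n+1)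
noncomputable def RR (N : ℕ) : ℝ := ∑ n ∈ Finset.range N, Real.log (n+1) / (n+1)
noncomputable def EE (N : ℕ) : ℝ :=
  PP N - ((N:ℝ) * (Real.log N)^2 - 2*N*Real.log N + 2*N + (Real.log N)^2/2)
noncomputable def SS (N : ℕ) : ℝ :=
  QQ N - ((N:ℝ) * Real.log N - N + Real.log N / 2)

lemma QQ_eq_log_factorial (N : ℕ) : QQ N = Real.log (Nat.factorial N : ℝ) := by
  rw [QQ, ← Finset.prod_range_add_one_eq_factorial N]
  push_cast
  rw [Real.log_prod (fun x _ => by positivity)]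

lemma tendsto_SS : Tendsto SS atTop (nhds (Real.log (2*Real.pi) / 2)) := by
  have h := Stirling.tendsto_stirlingSeq_sqrt_pi
  have hπ : (0:ℝ) < Real.sqrt Real.pi := Real.sqrt_pos.2 Real.pi_pos
  have hlog : Tendsto (fun n => Real.log (Stirling.stirlingSeq n) + Real.log 2 / 2) atTop
      (nhds (Real.log (Real.sqrt Real.pi) + Real.log 2 / 2)) :=
    (h.log hπ.ne').add tendsto_const_nhds
  have heq : ∀ᶠ n : ℕ in atTop, Real.log (Stirling.stirlingSeq n) + Real.log 2 / 2 = SS n := by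
    filter_upwards [eventually_ge_atTop 1] with n hn
    have hn0 : (0:ℝ) < n := by exact_mod_cast hn
    have hfac : (0:ℝ) < (Nat.factorial n : ℝ) := by exact_mod_cast n.factorial_pos
    have h2n : (0:ℝ) < Real.sqrt (2*n) := Real.sqrt_pos.2 (by positivity)
    have hpow : (0:ℝ) < ((n:ℝ)/Real.exp 1)^n := by positivity
    rw [Stirling.stirlingSeq, Real.log_div hfac.ne' (by positivity), Real.log_mul h2n.ne' hpow.ne',
      Real.log_sqrt (by positivity), Real.log_pow, Real.log_div hn0.ne' (Real.exp_pos 1).ne',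
      Real.log_exp, Real.log_mul two_ne_zero hn0.ne', SS, QQ_eq_log_factorial]
    ring
  have := hlog.congr' heq
  convert this using 2
  rw [Real.log_mul two_ne_zero Real.pi_pos.ne', Real.log_sqrt Real.pi_pos.le]
  ring

/-- the summand in Deninger's S -/
noncomputable def uu (x : ℝ) (m : ℕ) : ℝ :=
  (Real.log (x + (m+1)))^2 - (Real.log (m+1))^2 - 2 * x * Real.log (m+1) / (m+1)

lemma uu_bound {x : ℝ} (hx0 : 0 < x) (hx1 : x ≤ 1) {m : ℕ} (hm : 1 ≤ m) :
    |uu x m| ≤ 9 * ((m+1:ℝ))^(-(3/2 : ℝ)) := by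
  set t : ℝ := ((m+1 : ℕ) : ℝ) with ht
  have ht2 : (2:ℝ) ≤ t := by
    rw [ht]; exact_mod_cast Nat.succ_le_succ hm
  have ht0 : (0:ℝ) < t := by linarith
  set u : ℝ := x / t with hu
  have hu0 : 0 < u := by positivity
  have hu2 : u ≤ 1/2 := by
    rw [hu, div_le_iff₀ ht0]; linarith
  have hxt : x + t = t * (1 + u) := by
    rw [hu]; field_simp
    ring
  have hd : Real.log (x + t) = Real.log t + Real.log (1+u) := by
    rw [hxt, Real.log_mul ht0.ne' (by positivity)]
  set d : ℝ := Real.log (1+u) with hdd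
  have hd0 : 0 ≤ d := Real.log_nonneg (by linarith)
  have hdu : d ≤ u := by
    have := Real.log_le_sub_one_of_pos (show (0:ℝ) < 1+u by linarith)
    linarith
  -- |d - u| ≤ 2 u^2
  have habs : |d - u| ≤ 2 * u^2 := by
    have h1 : |(-u)| < 1 := by rw [abs_neg, abs_of_pos hu0]; linarith
    have := Real.abs_log_sub_add_sum_range_le h1 1
    simp only [Finset.sum_range_one, pow_one] at this
    have h2 : |(-u)| ^ (1+1) / (1 - |(-u)|) ≤ 2 * u^2 := by
      rw [abs_neg, abs_of_pos hu0, div_le_iff₀ (by linarith)]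
      norm_num
      nlinarith [hu0, hu2, sq_nonneg u]
    have h3 : (-u)^(0+1)/((0:ℕ)+1 : ℝ) + Real.log (1 - -u) = d - u := by
      rw [sub_neg_eq_add, hdd]; push_cast; ring
    rw [h3] at this
    exact this.trans h2
  have hlogt : 0 < Real.log t := Real.log_pos (by linarith)
  have hlogt_sqrt : Real.log t ≤ 2 * Real.sqrt t := by
    have h1 : Real.log (Real.sqrt t) ≤ Real.sqrt t - 1 :=
      Real.log_le_sub_one_of_pos (Real.sqrt_pos.2 ht0)
    have h2 : Real.log (Real.sqrt t) = Real.log t / 2 := Real.log_sqrt ht0.le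
    linarith
  -- uu = d^2 + 2 log t (d - u)
  have hux : uu x m = d^2 + 2 * Real.log t * (d - u) := by
    rw [uu]
    have : ((m:ℝ)+1) = t := by rw [ht]; push_cast; ring
    rw [this, hd]
    have h2 : 2 * x * Real.log t / t = 2 * Real.log t * u := by
      rw [hu]; field_simp
    rw [h2]; ring
  have hub : |uu x m| ≤ u^2 + 4 * Real.log t * u^2 := by
    rw [hux]
    have h1 : |d^2 + 2 * Real.log t * (d - u)| ≤ |d^2| + |2 * Real.log t * (d-u)| := abs_add_le _ _
    have h2 : |d^2| = d^2 := abs_of_nonneg (sq_nonneg d)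
    have h3 : |2 * Real.log t * (d-u)| = 2 * Real.log t * |d - u| := by
      rw [abs_mul, abs_of_nonneg (by linarith : (0:ℝ) ≤ 2 * Real.log t)]
    have h4 : d^2 ≤ u^2 := by nlinarith
    have h5 : Real.log t * |d - u| ≤ Real.log t * (2*u^2) :=
      mul_le_mul_of_nonneg_left habs hlogt.le
    nlinarith [habs, hlogt]
  have hut : u^2 ≤ 1 / t^2 := by
    rw [hu, div_pow]
    apply div_le_div₀ (by norm_num) _ (by positivity) le_rfl
    nlinarith
  have hsq1 : (1:ℝ) ≤ Real.sqrt t := by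
    rw [show (1:ℝ) = Real.sqrt 1 by simp]
    exact Real.sqrt_le_sqrt (by linarith)
  have hfin : |uu x m| ≤ 9 * Real.sqrt t / t^2 := by
    have : |uu x m| ≤ (1 + 8 * Real.sqrt t) * (1/t^2) := by
      have := mul_le_mul_of_nonneg_left hut (by positivity : (0:ℝ) ≤ 1 + 4 * Real.log t)
      calc |uu x m| ≤ u^2 + 4*Real.log t * u^2 := hub
        _ = (1 + 4*Real.log t) * u^2 := by ring
        _ ≤ (1 + 4*Real.log t) * (1/t^2) := this
        _ ≤ (1 + 8 * Real.sqrt t) * (1/t^2) := by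
            apply mul_le_mul_of_nonneg_right _ (by positivity)
            linarith
    calc |uu x m| ≤ (1 + 8*Real.sqrt t)*(1/t^2) := this
      _ ≤ (9 * Real.sqrt t) * (1/t^2) := by
          apply mul_le_mul_of_nonneg_right _ (by positivity)
          linarith
      _ = 9 * Real.sqrt t / t^2 := by ring
  have hrpow : Real.sqrt t / t^2 = t^(-(3/2:ℝ)) := by
    rw [Real.sqrt_eq_rpow, ← Real.rpow_natCast t 2, ← Real.rpow_sub ht0]
    norm_num
  have : ((m:ℝ)+1) = t := by rw [ht]; push_cast; ring
  rw [this, ← hrpow]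
  calc |uu x m| ≤ 9 * Real.sqrt t / t^2 := hfin
    _ = 9 * (Real.sqrt t / t^2) := by ring

lemma summable_uu {x : ℝ} (hx0 : 0 < x) (hx1 : x ≤ 1) : Summable (uu x) := by
  refine Summable.of_norm_bounded_eventually (g := fun m : ℕ => 9 * ((m+1:ℝ))^(-(3/2 : ℝ))) ?_ ?_
  · apply Summable.mul_left
    have h := (Real.summable_one_div_nat_rpow (p := (3/2:ℝ))).2 (by norm_num)
    have h2 := (summable_nat_add_iff 1).2 h
    apply h2.congr
    intro m
    rw [Real.rpow_neg (by positivity), one_div]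
    norm_num
  · rw [Nat.cofinite_eq_atTop]
    filter_upwards [eventually_ge_atTop 1] with m hm
    exact uu_bound hx0 hx1 hm

/-- key combinatorial rearrangement -/
lemma reindex (g : ℕ → ℝ) (r : ℕ) : ∀ N : ℕ,
    ∑ n ∈ Finset.range (N*(r+1)), g (n+1) =
      (∑ a ∈ Finset.range r, ∑ m ∈ Finset.range N, g (a+1+m*(r+1)))
        + ∑ k ∈ Finset.range N, g ((k+1)*(r+1))
  | 0 => by simp
  | (N+1) => by
    have h1 : (N+1)*(r+1) = N*(r+1) + (r+1) := by ring
    rw [h1, Finset.sum_range_add, reindex g r N]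
    simp only [Finset.sum_range_succ]
    have h2 : ∑ i ∈ Finset.range r, g (N*(r+1) + i + 1)
        = ∑ a ∈ Finset.range r, g (a+1+N*(r+1)) := by
      apply Finset.sum_congr rfl
      intro a _
      congr 1
      ring
    have h3 : g (N*(r+1) + r + 1) = g ((N+1)*(r+1)) := by congr 1; ring
    rw [h2, h3, Finset.sum_add_distrib]
    ring

lemma sum_Icc_cast (f : ℕ → ℝ) (n : ℕ) :
    ∑ a ∈ Finset.Icc 1 n, f a = ∑ a ∈ Finset.range n, f (a+1) := by
  rw [← Finset.Ico_add_one_right_eq_Icc, Finset.sum_Ico_eq_sum_range]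
  simp [add_comm]

lemma gauss_sum (n : ℕ) : ∑ a ∈ Finset.range n, ((a:ℝ)+1) = n*(n+1)/2 := by
  induction n with
  | zero => simp
  | succ n ih => rw [Finset.sum_range_succ, ih]; push_cast; ring

lemma tendsto_log_div_nat : Tendsto (fun N : ℕ => Real.log (N+1) / (N+1)) atTop (nhds 0) := by
  have h := Real.isLittleO_log_id_atTop.tendsto_div_nhds_zero
  have h2 : Tendsto (fun N : ℕ => ((N:ℝ)+1)) atTop atTop :=
    tendsto_atTop_add_const_right _ _ tendsto_natCast_atTop_atTop
  exact (h.comp h2)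




section
open Complex

/-! ### The Euler-Maclaurin approximation to zeta -/

noncomputable def zF (N : ℕ) (s : ℂ) : ℂ :=
  (∑ n ∈ Finset.range N, ((n:ℂ)+1) ^ (-s)) - (N:ℂ) ^ (1-s) * (1-s)⁻¹ - (N:ℂ) ^ (-s) / 2

noncomputable def zc (n : ℕ) (s : ℂ) : ℂ :=
  ((n:ℂ)+1)^(-s) - (((n:ℂ)+1)^(1-s) - (n:ℂ)^(1-s)) * (1-s)⁻¹
    - (((n:ℂ)+1)^(-s) - (n:ℂ)^(-s)) / 2

lemma zF_succ (N : ℕ) (s : ℂ) : zF (N+1) s = zF N s + zc N s := by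
  simp only [zF, zc, Finset.sum_range_succ]
  push_cast
  ring

lemma zF_partial (N : ℕ) (s : ℂ) :
    zF (N+1) s = zF 1 s + ∑ n ∈ Finset.range N, zc (n+1) s := by
  induction N with
  | zero => simp
  | succ N ih => rw [Finset.sum_range_succ, ← add_assoc, ← ih, zF_succ]

/-! ### Derivatives in the `t` variable -/

lemma hasDerivAt_real_cpow' {x : ℝ} (hx : 0 < x) (w : ℂ) :
    HasDerivAt (fun y : ℝ => (y:ℂ) ^ w) (w * (x:ℂ)^(w-1)) x := by
  rcases eq_or_ne w 0 with rfl | hw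
  · simp only [Complex.cpow_zero, zero_mul]
    exact hasDerivAt_const x 1
  · have hr : w - 1 ≠ -1 := by
      intro h; apply hw; linear_combination h
    have h := (hasDerivAt_ofReal_cpow_const' hx.ne' hr).const_mul w
    simp only [sub_add_cancel] at h
    convert h using 1
    all_goals try with_reducible_and_instances rfl
    funext y
    rw [← mul_div_assoc, mul_div_cancel_left₀ _ hw]

/-! ### Derivatives in the `s` variable -/

lemma hasDerivAt_cpow_negs {c : ℂ} (hc : c ≠ 0) (s : ℂ) :
    HasDerivAt (fun s : ℂ => c ^ (-s)) (-(Complex.log c) * c^(-s)) s := by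
  have h := ((hasStrictDerivAt_const_cpow (y := -s) (Or.inl hc)).hasDerivAt).comp s
    (hasDerivAt_neg s)
  convert h using 1
  all_goals try rfl
  all_goals ring

lemma hasDerivAt_cpow_one_sub {c : ℂ} (hc : c ≠ 0) (s : ℂ) :
    HasDerivAt (fun s : ℂ => c ^ (1-s)) (-(Complex.log c) * c^(1-s)) s := by
  have h := ((hasStrictDerivAt_const_cpow (y := 1-s) (Or.inl hc)).hasDerivAt).comp s
    ((hasDerivAt_id s).const_sub 1)
  convert h using 1
  all_goals try rfl
  all_goals ring

lemma hasDerivAt_inv_one_sub {s : ℂ} (hs : s ≠ 1) :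
    HasDerivAt (fun s : ℂ => (1-s)⁻¹) (((1-s)⁻¹)^2) s := by
  have h1s : (1:ℂ) - s ≠ 0 := sub_ne_zero.2 (Ne.symm hs)
  have := (((hasDerivAt_id s).const_sub 1)).fun_inv h1s
  convert this using 1
  all_goals try with_reducible_and_instances rfl
  all_goals simp only [id]
  all_goals field_simp

noncomputable def zF1 (N : ℕ) (s : ℂ) : ℂ :=
  (∑ n ∈ Finset.range N, -(Complex.log ((n:ℂ)+1)) * ((n:ℂ)+1) ^ (-s))
  + Complex.log N * ((N:ℂ)^(1-s) * (1-s)⁻¹) - (N:ℂ)^(1-s) * ((1-s)⁻¹)^2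
  + Complex.log N * (N:ℂ)^(-s) / 2

noncomputable def zF2 (N : ℕ) (s : ℂ) : ℂ :=
  (∑ n ∈ Finset.range N, (Complex.log ((n:ℂ)+1))^2 * ((n:ℂ)+1) ^ (-s))
  - (Complex.log N)^2 * ((N:ℂ)^(1-s) * (1-s)⁻¹)
  + 2 * Complex.log N * ((N:ℂ)^(1-s) * ((1-s)⁻¹)^2)
  - 2 * ((N:ℂ)^(1-s) * ((1-s)⁻¹)^3)
  - (Complex.log N)^2 * (N:ℂ)^(-s) / 2

lemma natp_ne (n : ℕ) : ((n:ℂ)+1) ≠ 0 := by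
  have : (0:ℝ) < (n:ℝ)+1 := by positivity
  intro h
  have := congrArg Complex.re h
  simp at this
  linarith

lemma hasDerivAt_zF {N : ℕ} (hN : 1 ≤ N) {s : ℂ} (hs : s ≠ 1) :
    HasDerivAt (zF N) (zF1 N s) s := by
  have hNne : (N:ℂ) ≠ 0 := Nat.cast_ne_zero.2 (by omega)
  have h1 : HasDerivAt (fun s : ℂ => ∑ n ∈ Finset.range N, ((n:ℂ)+1) ^ (-s))
      (∑ n ∈ Finset.range N, -(Complex.log ((n:ℂ)+1)) * ((n:ℂ)+1) ^ (-s)) s :=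
    HasDerivAt.fun_sum (fun n _ => hasDerivAt_cpow_negs (natp_ne n) s)
  have h2 : HasDerivAt (fun s : ℂ => (N:ℂ)^(1-s) * (1-s)⁻¹)
      (-(Complex.log N) * (N:ℂ)^(1-s) * (1-s)⁻¹ + (N:ℂ)^(1-s) * ((1-s)⁻¹)^2) s := by
    have := (hasDerivAt_cpow_one_sub hNne s).fun_mul (hasDerivAt_inv_one_sub hs)
    convert this using 1
    all_goals ring
  have h3 : HasDerivAt (fun s : ℂ => (N:ℂ)^(-s)/2) (-(Complex.log N) * (N:ℂ)^(-s) / 2) s :=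
    (hasDerivAt_cpow_negs hNne s).div_const 2
  have := (h1.sub h2).fun_sub h3
  convert this using 1
  all_goals try rfl
  all_goals (simp only [zF1]; ring)

lemma hasDerivAt_zF1 {N : ℕ} (hN : 1 ≤ N) {s : ℂ} (hs : s ≠ 1) :
    HasDerivAt (zF1 N) (zF2 N s) s := by
  have hNne : (N:ℂ) ≠ 0 := Nat.cast_ne_zero.2 (by omega)
  have h1 : HasDerivAt (fun s : ℂ => ∑ n ∈ Finset.range N, -(Complex.log ((n:ℂ)+1)) * ((n:ℂ)+1) ^ (-s))
      (∑ n ∈ Finset.range N, (Complex.log ((n:ℂ)+1))^2 * ((n:ℂ)+1) ^ (-s)) s := by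
    apply HasDerivAt.fun_sum
    intro n _
    have := (hasDerivAt_cpow_negs (natp_ne n) s).const_mul (-(Complex.log ((n:ℂ)+1)))
    convert this using 1
    all_goals try with_reducible_and_instances rfl
    all_goals ring
  have h2 : HasDerivAt (fun s : ℂ => Complex.log N * ((N:ℂ)^(1-s) * (1-s)⁻¹))
      (Complex.log N * (-(Complex.log N) * (N:ℂ)^(1-s) * (1-s)⁻¹ + (N:ℂ)^(1-s) * ((1-s)⁻¹)^2)) s := by
    apply HasDerivAt.const_mul
    have := (hasDerivAt_cpow_one_sub hNne s).fun_mul (hasDerivAt_inv_one_sub hs)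
    convert this using 1
    all_goals ring
  have h3 : HasDerivAt (fun s : ℂ => (N:ℂ)^(1-s) * ((1-s)⁻¹)^2)
      (-(Complex.log N) * (N:ℂ)^(1-s) * ((1-s)⁻¹)^2 + 2 * (N:ℂ)^(1-s) * ((1-s)⁻¹)^3) s := by
    have hp : HasDerivAt (fun s : ℂ => ((1-s)⁻¹)^2)
        (2 * ((1-s)⁻¹)^1 * ((1-s)⁻¹)^2) s := by
      have := (hasDerivAt_inv_one_sub hs).fun_pow 2
      convert this using 1
      all_goals try with_reducible_and_instances rfl
      all_goals norm_num
    have := (hasDerivAt_cpow_one_sub hNne s).fun_mul hp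
    convert this using 1
    all_goals try with_reducible_and_instances rfl
    all_goals ring
  have h4 : HasDerivAt (fun s : ℂ => Complex.log N * (N:ℂ)^(-s) / 2)
      (Complex.log N * (-(Complex.log N) * (N:ℂ)^(-s)) / 2) s :=
    ((hasDerivAt_cpow_negs hNne s).const_mul (Complex.log N)).div_const 2
  have := ((h1.add h2).fun_sub h3).fun_add h4
  convert this using 1
  all_goals try rfl
  all_goals (simp only [zF2]; ring)

lemma deriv2_zF {N : ℕ} (hN : 1 ≤ N) :
    deriv (deriv (zF N)) 0 = ((EE N : ℝ) : ℂ) := by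
  have h01 : (0:ℂ) ≠ 1 := by norm_num
  have hmem : {s : ℂ | s ≠ 1} ∈ nhds (0:ℂ) := isOpen_ne.mem_nhds h01
  have heq : deriv (zF N) =ᶠ[nhds (0:ℂ)] zF1 N := by
    filter_upwards [hmem] with s hs
    exact (hasDerivAt_zF hN hs).deriv
  rw [heq.deriv_eq, (hasDerivAt_zF1 hN h01).deriv]
  have hln : Complex.log (N:ℂ) = ((Real.log N : ℝ) : ℂ) := Complex.natCast_log.symm
  have hlnn : ∀ n : ℕ, Complex.log ((n:ℂ)+1) = ((Real.log ((n:ℝ)+1) : ℝ) : ℂ) := by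
    intro n
    rw [show ((n:ℂ)+1) = (((n:ℝ)+1 : ℝ) : ℂ) by push_cast; ring]
    exact (Complex.ofReal_log (by positivity)).symm
  simp only [zF2, neg_zero, Complex.cpow_zero, sub_zero, Complex.cpow_one, inv_one,
    one_pow, mul_one, hln, hlnn, EE, PP]
  push_cast
  ring

/-! ### Trapezoid estimate -/

lemma zc_eq_integral {n : ℕ} (hn : 1 ≤ n) {s : ℂ} (hs : s ≠ 1) :
    zc n s = ∫ t in (n:ℝ)..((n:ℝ)+1),
      (((t - (n:ℝ)) * ((n:ℝ) + 1 - t) / 2 : ℝ) : ℂ) * (s * (s+1) * (t:ℂ)^(-s-2)) := by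
  set a : ℝ := (n:ℝ) with ha
  have ha0 : 0 < a := by rw [ha]; exact_mod_cast hn
  set b : ℝ := a + 1 with hb
  have hab : a ≤ b := by rw [hb]; linarith
  have huIcc : Set.uIcc a b = Set.Icc a b := Set.uIcc_of_le hab
  have hpos : ∀ t ∈ Set.uIcc a b, 0 < t := by
    intro t ht
    rw [huIcc] at ht
    linarith [ht.1]
  -- the function and its derivatives
  set g : ℝ → ℂ := fun t => (t:ℂ)^(-s) with hg
  set g1 : ℝ → ℂ := fun t => -s * (t:ℂ)^(-s-1) with hg1
  set g2 : ℝ → ℂ := fun t => s * (s+1) * (t:ℂ)^(-s-2) with hg2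
  have hdg : ∀ t ∈ Set.uIcc a b, HasDerivAt g (g1 t) t := by
    intro t ht
    have := hasDerivAt_real_cpow' (hpos t ht) (-s)
    convert this using 1
  have hdg1 : ∀ t ∈ Set.uIcc a b, HasDerivAt g1 (g2 t) t := by
    intro t ht
    have := (hasDerivAt_real_cpow' (hpos t ht) (-s-1)).const_mul (-s)
    convert this using 1
    all_goals try with_reducible_and_instances rfl
    rw [show -s-1-1 = -s-2 by ring]
    ring
  -- the weight and its derivatives
  set φ : ℝ → ℝ := fun t => (t - a) * (b - t) / 2 with hφ
  set ψ : ℝ → ℝ := fun t => (a + b)/2 - t with hψ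
  have hdφ : ∀ t : ℝ, HasDerivAt φ (ψ t) t := by
    intro t
    have := (((hasDerivAt_id t).sub_const a).fun_mul ((hasDerivAt_const t b).fun_sub
      (hasDerivAt_id t))).div_const 2
    convert this using 1
    all_goals try rfl
    simp [hψ]
    ring
  have hdψ : ∀ t : ℝ, HasDerivAt ψ (-1 : ℝ) t := by
    intro t
    have := (hasDerivAt_const t ((a+b)/2)).fun_sub (hasDerivAt_id t)
    simpa using this
  have hcφ : Continuous φ := by
    apply Continuous.div_const
    exact (continuous_id.sub continuous_const).mul (continuous_const.sub continuous_id)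
  have hcψ : Continuous ψ := continuous_const.sub continuous_id
  -- continuity of g, g1, g2 on [[a,b]]
  have hcg : ContinuousOn g (Set.uIcc a b) :=
    fun t ht => ((hdg t ht).continuousAt).continuousWithinAt
  have hcg1 : ContinuousOn g1 (Set.uIcc a b) :=
    fun t ht => ((hdg1 t ht).continuousAt).continuousWithinAt
  have hcg2 : ContinuousOn g2 (Set.uIcc a b) := by
    intro t ht
    have h0 := (hasDerivAt_real_cpow' (hpos t ht) (-s-2)).continuousAt
    apply ContinuousWithinAt.mono _ (Set.subset_univ _)
    rw [hg2]
    exact ((continuousAt_const.mul h0).continuousWithinAt)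
  -- first integration by parts
  have I1 : ∫ t in a..b, ((φ t : ℝ) : ℂ) * g2 t
      = (φ b : ℂ) * g1 b - (φ a : ℂ) * g1 a - ∫ t in a..b, ((ψ t : ℝ) : ℂ) * g1 t := by
    apply intervalIntegral.integral_mul_deriv_eq_deriv_mul
    · intro t _; exact (hdφ t).ofReal_comp
    · intro t ht; exact hdg1 t ht
    · exact ((Complex.continuous_ofReal.comp hcψ).continuousOn).intervalIntegrable
    · exact hcg2.intervalIntegrable
  have I2 : ∫ t in a..b, ((ψ t : ℝ) : ℂ) * g1 t
      = (ψ b : ℂ) * g b - (ψ a : ℂ) * g a - ∫ t in a..b, ((-1 : ℝ) : ℂ) * g t := by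
    apply intervalIntegral.integral_mul_deriv_eq_deriv_mul
    · intro t _; exact (hdψ t).ofReal_comp
    · intro t ht; exact hdg t ht
    · exact (continuous_const.continuousOn).intervalIntegrable
    · exact hcg1.intervalIntegrable
  have Ieval : ∫ t in a..b, g t = ((b:ℂ)^(-s+1) - (a:ℂ)^(-s+1))/(-s+1) := by
    rw [hg]
    apply integral_cpow
    right
    constructor
    · intro h
      apply hs
      linear_combination -h
    · rw [huIcc]
      intro h
      linarith [h.1]
  have hIg : ∫ t in a..b, ((-1 : ℝ):ℂ) * g t = -(((b:ℂ)^(-s+1) - (a:ℂ)^(-s+1))/(-s+1)) := by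
    rw [intervalIntegral.integral_const_mul, Ieval]
    push_cast
    ring
  have hφa : φ a = 0 := by simp [hφ]
  have hφb : φ b = 0 := by simp [hφ]
  have hψa : ψ a = 1/2 := by rw [hψ, hb]; ring
  have hψb : ψ b = -(1/2) := by rw [hψ, hb]; ring
  rw [I1, I2, hIg, hφa, hφb, hψa, hψb]
  -- now everything is explicit
  have h1s : (1:ℂ) - s ≠ 0 := sub_ne_zero.2 (Ne.symm hs)
  have hsub : (-s+1) = 1 - s := by ring
  rw [hsub]
  simp only [zc, hg, hb]
  rw [ha]
  push_cast
  field_simp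
  ring

lemma zc_bound {n : ℕ} (hn : 1 ≤ n) {s : ℂ} (hs : s ≠ 1) (hre : -(1/4 : ℝ) < s.re)
    {C : ℝ} (hC : ‖s*(s+1)‖ ≤ C) :
    ‖zc n s‖ ≤ C * ((n:ℝ))^(-(7/4 : ℝ)) := by
  have hn0 : (0:ℝ) < (n:ℝ) := by exact_mod_cast hn
  have hC0 : 0 ≤ C := le_trans (norm_nonneg _) hC
  rw [zc_eq_integral hn hs]
  have key : ∀ t ∈ Set.uIoc (n:ℝ) ((n:ℝ)+1),
      ‖(((t - (n:ℝ)) * ((n:ℝ) + 1 - t) / 2 : ℝ) : ℂ) * (s * (s+1) * (t:ℂ)^(-s-2))‖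
        ≤ C * ((n:ℝ))^(-(7/4 : ℝ)) := by
    intro t ht
    rw [Set.uIoc_of_le (by linarith)] at ht
    obtain ⟨ht1, ht2⟩ := ht
    have ht0 : 0 < t := lt_trans hn0 ht1
    rw [norm_mul, norm_mul]
    have hφb : ‖(((t - (n:ℝ)) * ((n:ℝ) + 1 - t) / 2 : ℝ) : ℂ)‖ ≤ 1 := by
      rw [Complex.norm_real, Real.norm_eq_abs, abs_div]
      rw [_root_.abs_of_nonneg (by nlinarith : (0:ℝ) ≤ (t - (n:ℝ)) * ((n:ℝ) + 1 - t))]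
      rw [_root_.abs_of_pos (by norm_num : (0:ℝ) < 2)]
      rw [div_le_one (by norm_num)]
      nlinarith
    have hcb : ‖(t:ℂ)^(-s-2)‖ ≤ ((n:ℝ))^(-(7/4:ℝ)) := by
      rw [Complex.norm_cpow_eq_rpow_re_of_pos ht0]
      have e1 : t ^ (-s-2).re ≤ (n:ℝ) ^ (-s-2).re := by
        apply Real.rpow_le_rpow_of_nonpos hn0 ht1.le
        simp only [Complex.sub_re, Complex.neg_re, Complex.re_ofNat]
        linarith
      have e2 : (n:ℝ) ^ (-s-2).re ≤ (n:ℝ) ^ (-(7/4:ℝ)) := by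
        apply Real.rpow_le_rpow_of_exponent_le (by exact_mod_cast hn)
        simp only [Complex.sub_re, Complex.neg_re, Complex.re_ofNat]
        linarith
      exact e1.trans e2
    calc ‖(((t - (n:ℝ)) * ((n:ℝ) + 1 - t) / 2 : ℝ) : ℂ)‖ * (‖s*(s+1)‖ * ‖(t:ℂ)^(-s-2)‖)
        ≤ 1 * (C * ((n:ℝ))^(-(7/4:ℝ))) := by
          apply mul_le_mul hφb _ (by positivity) (by norm_num)
          exact mul_le_mul hC hcb (norm_nonneg _) hC0
      _ = C * ((n:ℝ))^(-(7/4:ℝ)) := by ring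
  have := intervalIntegral.norm_integral_le_of_norm_le_const key
  simpa using this

/-! ### The domain -/

def VV : Set ℂ := {s : ℂ | -(1/4:ℝ) < s.re} \ {1}

lemma VV_open : IsOpen VV :=
  (isOpen_lt continuous_const Complex.continuous_re).sdiff isClosed_singleton

lemma zero_mem_VV : (0:ℂ) ∈ VV := by
  constructor
  · simp only [Set.mem_setOf_eq, Complex.zero_re]; norm_num
  · simp

lemma VV_preconnected : IsPreconnected VV := by
  set A : Set ℂ := {s : ℂ | -(1/4:ℝ) < s.re ∧ s.re < 1} with hA
  set B : Set ℂ := {s : ℂ | (1/2:ℝ) < s.re ∧ 0 < s.im} with hB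
  set C : Set ℂ := {s : ℂ | (1/2:ℝ) < s.re ∧ s.im < 0} with hC
  set D : Set ℂ := {s : ℂ | (1:ℝ) < s.re} with hD
  have hAc : Convex ℝ A := (convex_halfSpace_re_gt _).inter (convex_halfSpace_re_lt _)
  have hBc : Convex ℝ B := (convex_halfSpace_re_gt _).inter (convex_halfSpace_im_gt _)
  have hCc : Convex ℝ C := (convex_halfSpace_re_gt _).inter (convex_halfSpace_im_lt _)
  have hDc : Convex ℝ D := convex_halfSpace_re_gt _
  have hVV : VV = ((A ∪ B) ∪ D) ∪ C := by
    ext s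
    simp only [VV, Set.mem_diff, Set.mem_setOf_eq, Set.mem_singleton_iff, Set.mem_union,
      hA, hB, hC, hD]
    constructor
    · rintro ⟨h1, h2⟩
      rcases lt_trichotomy s.re 1 with h | h | h
      · exact Or.inl (Or.inl (Or.inl ⟨h1, h⟩))
      · have him : s.im ≠ 0 := by
          intro h0
          apply h2
          apply Complex.ext <;> simp [h, h0]
        rcases him.lt_or_gt with h3 | h3
        · exact Or.inr ⟨by rw [h]; norm_num, h3⟩
        · exact Or.inl (Or.inl (Or.inr ⟨by rw [h]; norm_num, h3⟩))
      · exact Or.inl (Or.inr h)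
    · have hne : ∀ z : ℂ, z.im ≠ 0 → z ≠ 1 := by
        intro z h0 h1
        rw [h1] at h0
        simp at h0
      rintro (((⟨h1, h2⟩ | ⟨h1, h2⟩) | h) | ⟨h1, h2⟩)
      · exact ⟨h1, fun h => by rw [h] at h2; simp at h2⟩
      · exact ⟨by linarith, hne s h2.ne'⟩
      · refine ⟨by linarith, fun hh => by rw [hh] at h; simp at h⟩
      · exact ⟨by linarith, hne s h2.ne⟩
  rw [hVV]
  have pAB : (⟨3/4, 1/2⟩ : ℂ) ∈ A ∩ B := by
    constructor <;> constructor <;> norm_num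
  have pBD : (⟨2, 1⟩ : ℂ) ∈ B ∩ D := by
    constructor
    · constructor <;> norm_num
    · show (1:ℝ) < (2:ℝ); norm_num
  have pDC : (⟨2, -1⟩ : ℂ) ∈ D ∩ C := by
    constructor
    · show (1:ℝ) < (2:ℝ); norm_num
    · constructor <;> norm_num
  have h1 : IsPreconnected (A ∪ B) :=
    hAc.isPreconnected.union _ pAB.1 pAB.2 hBc.isPreconnected
  have h2 : IsPreconnected ((A ∪ B) ∪ D) :=
    h1.union _ (Or.inr pBD.1) pBD.2 hDc.isPreconnected
  exact h2.union _ (Or.inr pDC.1) pDC.2 hCc.isPreconnected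

lemma mem_VV_of_one_lt_re {s : ℂ} (hs : 1 < s.re) : s ∈ VV := by
  constructor
  · simp only [Set.mem_setOf_eq]; linarith
  · intro h
    rw [Set.mem_singleton_iff] at h
    rw [h] at hs
    simp at hs

lemma VV_ne_one {s : ℂ} (hs : s ∈ VV) : s ≠ 1 := hs.2

/-! ### Locally uniform convergence -/

noncomputable def GG : ℂ → ℂ := fun s => zF 1 s + ∑' n, zc (n+1) s

lemma summable_exponent : Summable (fun n : ℕ => ((n+1:ℕ):ℝ) ^ (-(7/4:ℝ))) := by
  have h := (Real.summable_one_div_nat_rpow (p := (7/4:ℝ))).2 (by norm_num)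
  have h2 := (summable_nat_add_iff 1).2 h
  apply h2.congr
  intro m
  rw [Real.rpow_neg (by positivity), one_div]

lemma tendstoUniformlyOn_zF {K : Set ℂ} (hK : K ⊆ VV) (hKc : IsCompact K) :
    TendstoUniformlyOn (fun N s => zF (N+1) s) GG atTop K := by
  obtain ⟨C, hC⟩ := hKc.exists_bound_of_continuousOn
    ((continuous_id.mul (continuous_id.add continuous_const)).continuousOn (f := fun s : ℂ => s * (s+1)))
  set C' := max C 0 with hC'
  have hC'0 : 0 ≤ C' := le_max_right _ _
  have hbound : ∀ (n : ℕ) (s : ℂ), s ∈ K → ‖zc (n+1) s‖ ≤ C' * ((n+1:ℕ):ℝ) ^ (-(7/4:ℝ)) := by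
    intro n s hsK
    have hsV := hK hsK
    apply zc_bound (by omega) (VV_ne_one hsV) hsV.1
    exact le_trans (hC s hsK) (le_max_left _ _)
  have hsum : Summable (fun n : ℕ => C' * ((n+1:ℕ):ℝ) ^ (-(7/4:ℝ))) :=
    summable_exponent.mul_left _
  have hM := tendstoUniformlyOn_tsum_nat hsum hbound (s := K)
  have hconst : TendstoUniformlyOn (fun _ : ℕ => zF 1) (zF 1) atTop K := by
    rw [Metric.tendstoUniformlyOn_iff]
    intro ε hε
    filter_upwards with N s _
    simpa using hε
  have hadd := hconst.add hM
  apply hadd.congr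
  filter_upwards with N s hsK
  exact (zF_partial N s).symm

lemma tlu_zF : TendstoLocallyUniformlyOn (fun N s => zF (N+1) s) GG atTop VV := by
  rw [tendstoLocallyUniformlyOn_iff_forall_isCompact VV_open]
  intro K hK hKc
  exact tendstoUniformlyOn_zF hK hKc

lemma differentiableOn_zF (N : ℕ) : DifferentiableOn ℂ (zF (N+1)) VV :=
  fun s hs => ((hasDerivAt_zF (by omega) (VV_ne_one hs)).differentiableAt).differentiableWithinAt

lemma differentiableOn_deriv_zF (N : ℕ) : DifferentiableOn ℂ (deriv (zF (N+1))) VV := by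
  apply DifferentiableOn.congr (f := zF1 (N+1))
  · exact fun s hs =>
      ((hasDerivAt_zF1 (by omega) (VV_ne_one hs)).differentiableAt).differentiableWithinAt
  · exact fun s hs => (hasDerivAt_zF (by omega) (VV_ne_one hs)).deriv

/-! ### Identification with the Riemann zeta function -/

lemma tendsto_nat_cpow_zero {w : ℂ} (hw : w.re < 0) :
    Tendsto (fun N : ℕ => ((N+1:ℕ):ℂ) ^ w) atTop (nhds 0) := by
  apply squeeze_zero_norm (a := fun N : ℕ => ((N+1:ℕ):ℝ) ^ w.re)
  · intro N
    rw [show (((N+1:ℕ):ℂ)) = ((((N+1:ℕ):ℝ)):ℂ) by push_cast; ring,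
      Complex.norm_cpow_eq_rpow_re_of_pos (by positivity)]
  · have h1 : Tendsto (fun N : ℕ => ((N+1:ℕ):ℝ)) atTop atTop := by
      apply tendsto_atTop_mono (f := fun N : ℕ => (N:ℝ))
      · intro N; push_cast; linarith
      · exact tendsto_natCast_atTop_atTop
    have h2 := (tendsto_rpow_neg_atTop (y := -w.re) (by linarith)).comp h1
    simp only [Function.comp_def, neg_neg] at h2
    exact h2

lemma zF_tendsto_zeta {s : ℂ} (hs : 1 < s.re) :
    Tendsto (fun N : ℕ => zF (N+1) s) atTop (nhds (riemannZeta s)) := by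
  have hsum : Summable (fun n : ℕ => ((n:ℂ)+1) ^ (-s)) := by
    have h := (Complex.summable_one_div_nat_cpow (p := s)).2 hs
    have h2 := (summable_nat_add_iff 1).2 h
    apply h2.congr
    intro n
    rw [Complex.cpow_neg]
    push_cast
    rw [one_div]
  have hzeta : riemannZeta s = ∑' n : ℕ, ((n:ℂ)+1) ^ (-s) := by
    rw [zeta_eq_tsum_one_div_nat_add_one_cpow hs]
    apply tsum_congr
    intro n
    rw [Complex.cpow_neg, one_div]
  have hpart : Tendsto (fun N : ℕ => ∑ n ∈ Finset.range (N+1), ((n:ℂ)+1) ^ (-s)) atTop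
      (nhds (riemannZeta s)) := by
    rw [hzeta]
    have h := hsum.hasSum.tendsto_sum_nat.comp (tendsto_add_atTop_nat 1)
    simpa [Function.comp_def] using h
  have hterm1 : Tendsto (fun N : ℕ => ((N+1:ℕ):ℂ)^(1-s) * (1-s)⁻¹) atTop (nhds 0) := by
    have := (tendsto_nat_cpow_zero (w := 1-s)
      (by simp only [Complex.sub_re, Complex.one_re]; linarith)).mul_const ((1-s)⁻¹)
    simpa using this
  have hterm2 : Tendsto (fun N : ℕ => ((N+1:ℕ):ℂ)^(-s)/2) atTop (nhds 0) := by
    have := (tendsto_nat_cpow_zero (w := -s)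
      (by simp only [Complex.neg_re]; linarith)).div_const 2
    simpa using this
  have hfinal := (hpart.sub hterm1).sub hterm2
  rw [sub_zero, sub_zero] at hfinal
  apply hfinal.congr
  intro N
  simp only [zF, Function.comp_def]

lemma GG_eq_zeta : Set.EqOn GG riemannZeta VV := by
  have hG_an : AnalyticOnNhd ℂ GG VV :=
    (tlu_zF.differentiableOn (Eventually.of_forall differentiableOn_zF)
      VV_open).analyticOnNhd VV_open
  have hz_an : AnalyticOnNhd ℂ riemannZeta VV :=
    DifferentiableOn.analyticOnNhd
      (fun s hs => (differentiableAt_riemannZeta (VV_ne_one hs)).differentiableWithinAt) VV_open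
  have hGpt : ∀ s : ℂ, 1 < s.re → GG s = riemannZeta s := by
    intro s hs1
    exact tendsto_nhds_unique (tlu_zF.tendsto_at (mem_VV_of_one_lt_re hs1)) (zF_tendsto_zeta hs1)
  have h2re : ∀ k : ℕ, 1 < ((2:ℂ) + (((k:ℝ)+1)⁻¹ : ℝ)).re := by
    intro k
    rw [Complex.add_re, Complex.ofReal_re]
    have : (0:ℝ) < ((k:ℝ)+1)⁻¹ := by positivity
    rw [show ((2:ℂ)).re = (2:ℝ) by simp]
    linarith
  have hu : Tendsto (fun k : ℕ => ((2:ℂ) + (((k:ℝ)+1)⁻¹ : ℝ))) atTop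
      (nhdsWithin 2 {(2:ℂ)}ᶜ) := by
    apply tendsto_nhdsWithin_of_tendsto_nhds_of_eventually_within
    · have h0 : Tendsto (fun k : ℕ => ((k:ℝ)+1)⁻¹) atTop (nhds 0) := by
        have := tendsto_one_div_add_atTop_nhds_zero_nat (𝕜 := ℝ)
        simpa [one_div] using this
      have h1 : Tendsto (fun k : ℕ => ((((k:ℝ)+1)⁻¹ : ℝ) : ℂ)) atTop (nhds 0) := by
        have := (Complex.continuous_ofReal.tendsto 0).comp h0
        simpa [Function.comp_def] using this
      have := h1.const_add (2:ℂ)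
      simpa using this
    · filter_upwards with k
      simp only [Set.mem_compl_iff, Set.mem_singleton_iff]
      intro h
      have h2 : ((((k:ℝ)+1)⁻¹ : ℝ) : ℂ) = 0 := by linear_combination h
      rw [Complex.ofReal_eq_zero] at h2
      have : (0:ℝ) < ((k:ℝ)+1)⁻¹ := by positivity
      linarith [h2 ▸ this]
  have hfreq : ∃ᶠ z in nhdsWithin 2 {(2:ℂ)}ᶜ, GG z = riemannZeta z :=
    hu.frequently (Frequently.of_forall (fun k => hGpt _ (h2re k)))
  exact hG_an.eqOn_of_preconnected_of_frequently_eq hz_an VV_preconnected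
    (mem_VV_of_one_lt_re (by rw [show ((2:ℂ)).re = (2:ℝ) by simp]; norm_num)) hfreq

lemma exists_Z : ∃ Z : ℝ, Tendsto EE atTop (nhds Z) ∧
    ((Z:ℝ):ℂ) = iteratedDeriv 2 riemannZeta 0 := by
  have htluζ : TendstoLocallyUniformlyOn (fun N s => zF (N+1) s) riemannZeta atTop VV :=
    tlu_zF.congr_right (fun s hs => GG_eq_zeta hs)
  have hd1 := htluζ.deriv (Eventually.of_forall differentiableOn_zF) VV_open
  have hd2 := hd1.deriv (Eventually.of_forall differentiableOn_deriv_zF) VV_open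
  have htd := hd2.tendsto_at zero_mem_VV
  have htd' : Tendsto (fun N : ℕ => ((EE (N+1) : ℝ) : ℂ)) atTop
      (nhds (deriv (deriv riemannZeta) 0)) := by
    apply htd.congr
    intro N
    exact deriv2_zF (by omega)
  have hCc : CauchySeq (fun N : ℕ => ((EE (N+1):ℝ):ℂ)) := htd'.cauchySeq
  have hCr : CauchySeq (fun N : ℕ => EE (N+1)) := by
    rw [Metric.cauchySeq_iff] at hCc ⊢
    intro ε hε
    obtain ⟨M, hM⟩ := hCc ε hε
    refine ⟨M, fun m hm n hn => ?_⟩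
    have := hM m hm n hn
    rwa [Complex.dist_eq, ← Complex.ofReal_sub, Complex.norm_real, Real.norm_eq_abs, ← Real.dist_eq] at this
  obtain ⟨Z, hZ⟩ := cauchySeq_tendsto_of_complete hCr
  refine ⟨Z, (tendsto_add_atTop_iff_nat 1).1 hZ, ?_⟩
  have h2 : Tendsto (fun N : ℕ => ((EE (N+1):ℝ):ℂ)) atTop (nhds ((Z:ℝ):ℂ)) :=
    (Complex.continuous_ofReal.tendsto _).comp hZ
  rw [tendsto_nhds_unique h2 htd']
  rw [show (2:ℕ) = 1+1 from rfl, iteratedDeriv_succ, iteratedDeriv_one]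


end

/-! ### Final assembly -/

noncomputable def gq (q n : ℕ) : ℝ := (Real.log ((n:ℝ)/q))^2

lemma sum_gq (q : ℕ) (hq : 1 ≤ q) (M : ℕ) :
    ∑ n ∈ Finset.range (M*q), gq q (n+1)
      = PP (M*q) - 2*Real.log q * QQ (M*q) + ((M*q : ℕ):ℝ)*(Real.log q)^2 := by
  have hq0 : (0:ℝ) < q := by positivity
  have hterm : ∀ n : ℕ, gq q (n+1)
      = (Real.log ((n:ℝ)+1))^2 - 2*Real.log q * Real.log ((n:ℝ)+1) + (Real.log q)^2 := by
    intro n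
    rw [gq, show ((n+1:ℕ):ℝ) = (n:ℝ)+1 by push_cast; ring,
      Real.log_div (by positivity) hq0.ne']
    ring
  rw [Finset.sum_congr rfl (fun n _ => hterm n)]
  rw [Finset.sum_add_distrib, Finset.sum_sub_distrib, ← Finset.mul_sum]
  simp only [Finset.sum_const, Finset.card_range, nsmul_eq_mul]
  rw [PP, QQ]

lemma W_eq (q : ℕ) (hq : 2 ≤ q) (N : ℕ) :
    ∑ a ∈ Finset.range (q-1), ((Real.log (((a+1:ℕ):ℝ)/q))^2
        + ∑ m ∈ Finset.range N, uu (((a+1:ℕ):ℝ)/q) m)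
      = EE ((N+1)*q) - q*EE (N+1) - 2*(Real.log q)*SS ((N+1)*q)
        - ((q-1:ℕ):ℝ)*(RR (N+1) - (Real.log ((N:ℝ)+1))^2/2) - (Real.log q)^2/2
        + ((q-1:ℕ):ℝ)*(Real.log ((N:ℝ)+1))/((N:ℝ)+1) := by
  set r := q - 1 with hrdef
  have hrq : q = r + 1 := by omega
  have hq0 : (0:ℝ) < q := by positivity
  have hq1 : (1:ℕ) ≤ q := by omega
  have hrow : ∀ a ∈ Finset.range r, (Real.log (((a+1:ℕ):ℝ)/q))^2
      + ∑ m ∈ Finset.range N, uu (((a+1:ℕ):ℝ)/q) m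
      = (∑ m ∈ Finset.range (N+1), gq q (a+1+m*q))
        - PP N - 2*((a+1:ℕ):ℝ)/q * RR N := by
    intro a _
    have hsplit : ∑ m ∈ Finset.range (N+1), gq q (a+1+m*q)
        = (∑ m ∈ Finset.range N, gq q (a+1+(m+1)*q)) + gq q (a+1+0*q) :=
      Finset.sum_range_succ' _ _
    have h1 : gq q (a+1+0*q) = (Real.log (((a+1:ℕ):ℝ)/q))^2 := by
      rw [gq]
      norm_num
    have h2 : ∀ m : ℕ, uu (((a+1:ℕ):ℝ)/q) m
        = gq q (a+1+(m+1)*q) - (Real.log ((m:ℝ)+1))^2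
          - 2*(((a+1:ℕ):ℝ)/q) * Real.log ((m:ℝ)+1) / ((m:ℝ)+1) := by
      intro m
      have harg : ((a+1+(m+1)*q : ℕ):ℝ)/q = ((a+1:ℕ):ℝ)/q + ((m:ℝ)+1) := by
        push_cast
        field_simp
      rw [uu, gq, harg]
    have h3 : ∑ m ∈ Finset.range N, 2*(((a+1:ℕ):ℝ)/q) * Real.log ((m:ℝ)+1) / ((m:ℝ)+1)
        = 2*((a+1:ℕ):ℝ)/q * RR N := by
      rw [RR, Finset.mul_sum]
      apply Finset.sum_congr rfl
      intro m _
      ring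
    rw [Finset.sum_congr rfl (fun m _ => h2 m), Finset.sum_sub_distrib,
      Finset.sum_sub_distrib, h3, hsplit, h1, PP]
    ring
  rw [Finset.sum_congr rfl hrow]
  rw [Finset.sum_sub_distrib, Finset.sum_sub_distrib]
  simp only [Finset.sum_const, Finset.card_range, nsmul_eq_mul]
  have hreindex : ∑ a ∈ Finset.range r, ∑ m ∈ Finset.range (N+1), gq q (a+1+m*q)
      = (∑ n ∈ Finset.range ((N+1)*q), gq q (n+1))
        - ∑ k ∈ Finset.range (N+1), gq q ((k+1)*q) := by
    rw [hrq, reindex (gq (r+1)) r (N+1)]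
    ring
  rw [hreindex]
  have hsum2 : ∑ k ∈ Finset.range (N+1), gq q ((k+1)*q) = PP (N+1) := by
    rw [PP]
    apply Finset.sum_congr rfl
    intro k _
    rw [gq]
    have : (((k+1)*q : ℕ):ℝ)/q = (k:ℝ)+1 := by
      push_cast
      field_simp
    rw [this]
  rw [sum_gq q hq1 (N+1), hsum2]
  -- gauss sum
  have hgauss : ∑ a ∈ Finset.range r, 2*((a+1:ℕ):ℝ)/q * RR N
      = (r:ℝ) * RR N := by
    rw [← Finset.sum_mul]
    congr 1
    have hper : ∀ a ∈ Finset.range r, 2*((a+1:ℕ):ℝ)/q = 2/q * ((a:ℝ)+1) := by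
      intro a _
      push_cast
      ring
    rw [Finset.sum_congr rfl hper, ← Finset.mul_sum, gauss_sum r]
    have hq' : (r:ℝ) + 1 = (q:ℝ) := by rw [hrq]; push_cast; ring
    rw [← hq']
    have h0 : (r:ℝ) + 1 ≠ 0 := by positivity
    field_simp
  rw [hgauss]
  have hPN : PP N = PP (N+1) - (Real.log ((N:ℝ)+1))^2 := by
    rw [PP, PP, Finset.sum_range_succ]
    push_cast
    ring
  have hRN : RR N = RR (N+1) - Real.log ((N:ℝ)+1)/((N:ℝ)+1) := by
    rw [RR, RR, Finset.sum_range_succ]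
    push_cast
    ring
  have hcast1 : (((N+1)*q : ℕ):ℝ) = ((N:ℝ)+1)*(q:ℝ) := by push_cast; ring
  have hcast2 : ((N+1 : ℕ):ℝ) = (N:ℝ)+1 := by push_cast; ring
  have hlogNq : Real.log (((N+1)*q : ℕ):ℝ) = Real.log ((N:ℝ)+1) + Real.log q := by
    rw [hcast1, Real.log_mul (by positivity) hq0.ne']
  have hlogN1 : Real.log ((N+1 : ℕ):ℝ) = Real.log ((N:ℝ)+1) := by rw [hcast2]
  have hrr : (r:ℝ) = (q:ℝ) - 1 := by
    rw [hrq]; push_cast; ring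
  simp only [EE, SS]
  rw [hlogNq, hlogN1, hcast1, hcast2, hPN, hRN, hrr]
  ring

theorem main_real (γ₁ : ℝ)
    (hγ₁ : Filter.Tendsto
      (fun N : ℕ => (∑ j ∈ Finset.Icc 1 N, Real.log j / j) - (Real.log N) ^ 2 / 2)
      Filter.atTop (nhds γ₁))
    (q : ℕ) (hq : 2 ≤ q) (Z : ℝ) (hZ : Tendsto EE atTop (nhds Z)) :
    (∑ a ∈ Finset.Icc 1 (q - 1), deningerS γ₁ ((a : ℝ) / q))
      = -Z*((q:ℝ)-1) - Real.log q * Real.log (2*Real.pi) - (Real.log q)^2/2 := by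
  set r := q - 1 with hrdef
  have hrq : q = r + 1 := by omega
  have hr1 : 1 ≤ r := by omega
  have hq0 : (0:ℝ) < q := by positivity
  set lq : ℝ := Real.log q with hlq
  set x : ℕ → ℝ := fun a => ((a+1:ℕ):ℝ)/q with hx
  have hx0 : ∀ a, 0 < x a := by
    intro a
    rw [hx]
    positivity
  have hx1 : ∀ a ∈ Finset.range r, x a ≤ 1 := by
    intro a ha
    rw [hx, div_le_one hq0]
    rw [Finset.mem_range] at ha
    have : a + 1 ≤ q := by omega
    exact_mod_cast this
  have hsummable : ∀ a ∈ Finset.range r, Summable (uu (x a)) :=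
    fun a ha => summable_uu (hx0 a) (hx1 a ha)
  -- rewrite the statement sum over Icc as a sum over range
  have hicc : ∑ a ∈ Finset.Icc 1 (q-1), deningerS γ₁ ((a : ℝ) / q)
      = ∑ a ∈ Finset.range r, deningerS γ₁ (x a) := by
    rw [← hrdef, sum_Icc_cast (fun a => deningerS γ₁ ((a : ℝ) / q)) r]
  rw [hicc]
  have hden : ∀ a, deningerS γ₁ (x a)
      = 2*γ₁*(x a) + ((Real.log (x a))^2 + ∑' m, uu (x a) m) := by
    intro a
    simp only [deningerS, uu, add_assoc]
  rw [Finset.sum_congr rfl (fun a _ => hden a), Finset.sum_add_distrib]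
  -- the limit of partial sums
  have hW : Tendsto (fun N => ∑ a ∈ Finset.range r,
      ((Real.log (x a))^2 + ∑ m ∈ Finset.range N, uu (x a) m)) atTop
      (nhds (∑ a ∈ Finset.range r, ((Real.log (x a))^2 + ∑' m, uu (x a) m))) := by
    apply tendsto_finset_sum
    intro a ha
    exact tendsto_const_nhds.add (hsummable a ha).hasSum.tendsto_sum_nat
  -- the limit via the identity
  have hγ' : Tendsto (fun N : ℕ => RR (N+1) - (Real.log ((N:ℝ)+1))^2/2) atTop (nhds γ₁) := by
    have h1 := hγ₁.comp (tendsto_add_atTop_nat 1)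
    apply h1.congr
    intro N
    simp only [Function.comp_apply]
    congr 1
    · rw [RR, sum_Icc_cast (fun j => Real.log j / j) (N+1)]
      apply Finset.sum_congr rfl
      intro a _
      push_cast
      ring_nf
    · push_cast
      ring_nf
  have hmul : Tendsto (fun N : ℕ => (N+1)*q) atTop atTop := by
    apply tendsto_atTop_mono (f := fun N : ℕ => N)
    · intro N
      have : N + 1 ≤ (N+1)*q := Nat.le_mul_of_pos_right _ (by omega)
      omega
    · exact tendsto_id
  have hE1 : Tendsto (fun N : ℕ => EE ((N+1)*q)) atTop (nhds Z) := hZ.comp hmul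
  have hE2 : Tendsto (fun N : ℕ => EE (N+1)) atTop (nhds Z) := hZ.comp (tendsto_add_atTop_nat 1)
  have hS1 : Tendsto (fun N : ℕ => SS ((N+1)*q)) atTop (nhds (Real.log (2*Real.pi)/2)) :=
    tendsto_SS.comp hmul
  have hRHS : Tendsto (fun N : ℕ => EE ((N+1)*q) - q*EE (N+1) - 2*lq*SS ((N+1)*q)
      - (r:ℝ)*(RR (N+1) - (Real.log ((N:ℝ)+1))^2/2) - lq^2/2
      + (r:ℝ)*(Real.log ((N:ℝ)+1))/((N:ℝ)+1)) atTop
      (nhds (Z - q*Z - 2*lq*(Real.log (2*Real.pi)/2) - (r:ℝ)*γ₁ - lq^2/2 + 0)) := by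
    refine ((((hE1.sub (hE2.const_mul _)).sub ((hS1.const_mul _))).sub
      (hγ'.const_mul _)).sub tendsto_const_nhds).add ?_
    have := tendsto_log_div_nat.const_mul ((r:ℝ))
    simpa [mul_div_assoc] using this
  have hWlim : Tendsto (fun N => ∑ a ∈ Finset.range r,
      ((Real.log (x a))^2 + ∑ m ∈ Finset.range N, uu (x a) m)) atTop
      (nhds (Z - q*Z - 2*lq*(Real.log (2*Real.pi)/2) - (r:ℝ)*γ₁ - lq^2/2 + 0)) := by
    apply hRHS.congr
    intro N
    have := (W_eq q hq N)
    simp only [← hrdef] at this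
    rw [← this]
  have hkey := tendsto_nhds_unique hW hWlim
  rw [hkey]
  -- the 2γ₁x sum
  have hsum2g : ∑ a ∈ Finset.range r, 2*γ₁*(x a) = γ₁ * (r:ℝ) := by
    have h1 : ∑ a ∈ Finset.range r, 2*γ₁*(x a)
        = 2*γ₁/q * ∑ a ∈ Finset.range r, ((a:ℝ)+1) := by
      rw [Finset.mul_sum]
      apply Finset.sum_congr rfl
      intro a _
      rw [hx]
      push_cast
      ring
    rw [h1, gauss_sum r]
    have hq' : (r:ℝ) + 1 = (q:ℝ) := by rw [hrq]; push_cast; ring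
    field_simp [hq']
    rw [← hq']
  rw [hsum2g]
  have hrr : (r:ℝ) = (q:ℝ) - 1 := by rw [hrq]; push_cast; ring
  rw [hrr]
  ring

end DenAux

theorem sum_S_eq (γ₁ : ℝ)
    (hγ₁ : Filter.Tendsto
      (fun N : ℕ => (∑ j ∈ Finset.Icc 1 N, Real.log j / j) - (Real.log N) ^ 2 / 2)
      Filter.atTop (nhds γ₁))
    (q : ℕ) (hq : q.Prime) (hodd : Odd q) :
    ((∑ a ∈ Finset.Icc 1 (q - 1), deningerS γ₁ ((a : ℝ) / q) : ℝ) : ℂ) =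
      -(iteratedDeriv 2 riemannZeta 0) * ((q : ℂ) - 1) -
        (Real.log q : ℂ) * (Real.log (2 * Real.pi) : ℂ) -
        (Real.log q : ℂ) ^ 2 / 2 := by
  obtain ⟨Z, hZ, hZeq⟩ := DenAux.exists_Z
  rw [DenAux.main_real γ₁ hγ₁ q hq.two_le Z hZ, ← hZeq]
  push_cast
  ring
end
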